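/- arXiv:1503.04562 — 4 statements merged into one kernel-verified Lean document; each statement's English description precedes it below -/
import Mathlib

section
/- Let G = 2.A_n be the double cover of the alternating group A_n. If n ∈ {4, 5}, then every Sylow 2-subgroup of G is isomorphic to the quaternion group of order 8; if n ∈ {6, 7}, then every Sylow 2-subgroup of G is isomorphic to the generalized quaternion group of order 16. -/
/-! Double covers `2^α.S_n` of the symmetric groups, via the presentation with
generators `z, t_1, …, t_{n-1}` and relations `z² = 1`, `t_j² = z^α`,
`(t_j t_{j+1})³ = z^α`, `[z, t_j] = 1`, and `t_j t_k = z t_k t_j` for `|j - k| > 1`.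
Here `α = 0` gives `2^+.S_n` and `α = 1` gives `2^-.S_n`. -/

namespace DoubleCover

/-- Generators: `Sum.inl ()` is `z`; `Sum.inr j` is `t_{j+1}` for `j : Fin (n - 1)`. -/
abbrev Gen (n : ℕ) := Unit ⊕ Fin (n - 1)

/-- The word `z` in the free group on the generators. -/
def zw (n : ℕ) : FreeGroup (Gen n) := FreeGroup.of (Sum.inl ())

/-- The word `t_{j+1}` in the free group on the generators. -/
def tw (n : ℕ) (j : Fin (n - 1)) : FreeGroup (Gen n) := FreeGroup.of (Sum.inr j)

/-- The relations of the presentation of `2^α.S_n`. -/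
def rels (n α : ℕ) : Set (FreeGroup (Gen n)) :=
  {r | r = zw n ^ 2
    ∨ (∃ j, r = tw n j ^ 2 * (zw n ^ α)⁻¹)
    ∨ (∃ j k : Fin (n - 1), (j : ℕ) + 1 = (k : ℕ) ∧
        r = (tw n j * tw n k) ^ 3 * (zw n ^ α)⁻¹)
    ∨ (∃ j, r = zw n * tw n j * (zw n)⁻¹ * (tw n j)⁻¹)
    ∨ (∃ j k : Fin (n - 1), 1 < Nat.dist (j : ℕ) (k : ℕ) ∧
        r = tw n j * tw n k * (zw n * tw n k * tw n j)⁻¹)}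

/-- The double cover `2^α.S_n` of the symmetric group `S_n`. -/
abbrev Cover (n α : ℕ) := PresentedGroup (rels n α)

/-- The central element `z` of `2^α.S_n`. -/
def z (n α : ℕ) : Cover n α := PresentedGroup.of (Sum.inl ())

/-- The generator `t_{j+1}` of `2^α.S_n`, lifting the transposition `(j+1, j+2)`. -/
def t (n α : ℕ) (j : Fin (n - 1)) : Cover n α := PresentedGroup.of (Sum.inr j)

end DoubleCover

/-- A subgroup is an elementary abelian 2-subgroup iff every element squares to `1`
(this forces it to be abelian). -/
def IsElemAbelianTwo {G : Type*} [Group G] (E : Subgroup G) : Prop :=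
  ∀ x ∈ E, x ^ 2 = 1

namespace SylowQuatAux

open DoubleCover Subgroup Equiv

variable {n α : ℕ}

lemma mk_rel {r : FreeGroup (Gen n)} (h : r ∈ rels n α) :
    PresentedGroup.mk (rels n α) r = 1 :=
  (QuotientGroup.eq_one_iff r).mpr (Subgroup.subset_normalClosure h)

lemma z_eq : z n α = PresentedGroup.mk (rels n α) (zw n) := rfl

lemma t_eq (j : Fin (n - 1)) : t n α j = PresentedGroup.mk (rels n α) (tw n j) := rfl

lemma zsq : z n α ^ 2 = 1 := by
  rw [z_eq, ← map_pow]
  exact mk_rel (Or.inl rfl)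

lemma tsq (j : Fin (n - 1)) : t n α j ^ 2 = z n α ^ α := by
  have h := mk_rel (n := n) (α := α) (Or.inr (Or.inl ⟨j, rfl⟩))
  rw [map_mul, map_inv, map_pow, map_pow, mul_inv_eq_one] at h
  exact h

lemma tcomm (j k : Fin (n - 1)) (h : 1 < Nat.dist (j : ℕ) (k : ℕ)) :
    t n α j * t n α k = z n α * (t n α k * t n α j) := by
  have h5 := mk_rel (n := n) (α := α) (Or.inr (Or.inr (Or.inr (Or.inr ⟨j, k, h, rfl⟩))))
  rw [map_mul, map_inv, map_mul, map_mul, map_mul, mul_inv_eq_one] at h5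
  rw [t_eq, t_eq, z_eq, h5, mul_assoc]

lemma zcomm (g : Cover n α) : Commute (z n α) g := by
  have hg : g ∈ Subgroup.centralizer {z n α} := by
    apply PresentedGroup.generated_by
    intro j
    rw [Subgroup.mem_centralizer_iff]
    intro h hh
    rw [Set.mem_singleton_iff] at hh
    subst hh
    match j with
    | Sum.inl () => rfl
    | Sum.inr j =>
      have h4 := mk_rel (n := n) (α := α) (Or.inr (Or.inr (Or.inr (Or.inl ⟨j, rfl⟩))))
      simp only [map_mul, map_inv] at h4
      rw [mul_inv_eq_one] at h4
      exact mul_inv_eq_iff_eq_mul.mp h4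
  exact Subgroup.mem_centralizer_iff.mp hg (z n α) rfl

lemma central_sq_key (c y : Cover n α) (hc : ∀ g, Commute c g) (h1 : c * c = 1) :
    (c * y) * (c * y) = y * y := by
  have h2 : c * y = y * c := (hc y).eq
  calc (c * y) * (c * y) = c * (y * c) * y := by group
    _ = c * (c * y) * y := by rw [← h2]
    _ = (c * c) * (y * y) := by group
    _ = y * y := by rw [h1, one_mul]

lemma pair_sq (j k : Fin (n - 1)) (hjk : 1 < Nat.dist (j : ℕ) (k : ℕ)) :
    (t n α j * t n α k) * (t n α j * t n α k) = z n α := by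
  have h1 := tcomm (n := n) (α := α) k j (by rwa [Nat.dist_comm])
  have hzz : z n α ^ α * z n α ^ α = 1 := by
    rw [← pow_add, show α + α = 2 * α by ring, pow_mul, zsq, one_pow]
  calc (t n α j * t n α k) * (t n α j * t n α k)
      = t n α j * (t n α k * t n α j) * t n α k := by group
    _ = t n α j * (z n α * (t n α j * t n α k)) * t n α k := by rw [h1]
    _ = (t n α j * z n α) * ((t n α j * t n α k) * t n α k) := by group
    _ = (z n α * t n α j) * ((t n α j * t n α k) * t n α k) := by
        rw [← (zcomm (t n α j)).eq]
    _ = z n α * ((t n α j * t n α j) * (t n α k * t n α k)) := by group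
    _ = z n α * (z n α ^ α * z n α ^ α) := by
        rw [← pow_two, ← pow_two, tsq, tsq]
    _ = z n α := by rw [hzz, mul_one]

section WithPi

variable (π : Cover n α →* Equiv.Perm (Fin n))

lemma sq_eq (hπker : π.ker = Subgroup.zpowers (z n α))
    (x y : Cover n α) (h : π x = π y) : x * x = y * y := by
  have hk : x * y⁻¹ ∈ π.ker := by
    rw [MonoidHom.mem_ker, map_mul, map_inv, h, mul_inv_cancel]
  rw [hπker, Subgroup.mem_zpowers_iff] at hk
  obtain ⟨k, hk⟩ := hk
  have hx : x = z n α ^ k * y := by rw [hk, inv_mul_cancel_right]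
  have hc2 : (z n α ^ k) * (z n α ^ k) = 1 := by
    rw [← zpow_add]
    have h2 : z n α ^ (k + k) = (z n α ^ (2 : ℤ)) ^ k := by
      rw [← zpow_mul]; congr 1; ring
    rw [h2, show (z n α) ^ (2 : ℤ) = (z n α) ^ (2 : ℕ) from zpow_natCast _ 2, zsq, one_zpow]
  rw [hx]
  exact central_sq_key _ _ (fun g => (zcomm g).zpow_left k) hc2

/-- The key abstract step: a subgroup with generalized quaternion presentation data whose
order matches the 2-part of the group order gives the iso for every Sylow 2-subgroup. -/
lemma sylow_iso {G : Type*} [Group G] [Finite G] {m : ℕ} (hm : 2 ≤ m)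
    (A B : G) (hA : orderOf A = 2 * m) (hB2 : B * B = A ^ m)
    (hBA : B * A * B⁻¹ = A⁻¹)
    (hcard : 4 * m = 2 ^ ((Nat.card G).factorization 2))
    (P : Sylow 2 G) : Nonempty (↥(P : Subgroup G) ≃* QuaternionGroup m) := by
  haveI : NeZero m := ⟨by omega⟩
  haveI : NeZero (2 * m) := ⟨by omega⟩
  haveI : Fact (Nat.Prime 2) := ⟨Nat.prime_two⟩
  set g : ZMod (2 * m) → G := fun i => A ^ i.val with hg
  have gcong : ∀ a b : ℕ, a % (2 * m) = b % (2 * m) → A ^ a = A ^ b := by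
    intro a b h
    refine pow_eq_pow_iff_modEq.mpr ?_
    rw [hA]; exact h
  have gzero : g 0 = 1 := by
    show A ^ (0 : ZMod (2 * m)).val = 1
    rw [ZMod.val_zero, pow_zero]
  have gadd : ∀ i j : ZMod (2 * m), g (i + j) = g i * g j := by
    intro i j
    show A ^ _ = A ^ _ * A ^ _
    rw [← pow_add]
    apply gcong
    rw [ZMod.val_add, Nat.mod_mod_of_dvd _ dvd_rfl]
  have gneg : ∀ i : ZMod (2 * m), g (-i) = (g i)⁻¹ := by
    intro i
    have h := gadd i (-i)
    rw [add_neg_cancel, gzero] at h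
    exact (inv_eq_of_mul_eq_one_right h.symm).symm
  have gnat : ∀ a : ℕ, g (a : ZMod (2 * m)) = A ^ a := by
    intro a
    show A ^ _ = A ^ _
    apply gcong
    rw [ZMod.val_natCast, Nat.mod_mod_of_dvd _ dvd_rfl]
  have hBA2 : B * A = A⁻¹ * B := by rw [← hBA]; group
  have hAB1 : A * B = B * A⁻¹ := by
    calc A * B = A * (B * A) * A⁻¹ := by group
      _ = A * (A⁻¹ * B) * A⁻¹ := by rw [hBA2]
      _ = B * A⁻¹ := by group
  have hcomm : ∀ a : ℕ, A ^ a * B = B * (A ^ a)⁻¹ := by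
    intro a
    induction a with
    | zero => simp
    | succ i ih =>
      calc A ^ (i + 1) * B = A * (A ^ i * B) := by rw [pow_succ']; group
        _ = A * (B * (A ^ i)⁻¹) := by rw [ih]
        _ = (A * B) * (A ^ i)⁻¹ := by group
        _ = B * A⁻¹ * (A ^ i)⁻¹ := by rw [hAB1]
        _ = B * (A ^ i * A)⁻¹ := by group
        _ = B * (A ^ (i + 1))⁻¹ := by rw [pow_succ]
  have gcomm : ∀ i : ZMod (2 * m), g i * B = B * g (-i) := by
    intro i
    show A ^ i.val * B = B * g (-i)
    rw [hcomm, gneg]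
  have hB2' : B * B = g ((m : ℕ) : ZMod (2 * m)) := by rw [gnat]; exact hB2
  let f : QuaternionGroup m →* G :=
    MonoidHom.mk' (fun x => match x with
      | QuaternionGroup.a i => g i
      | QuaternionGroup.xa i => B * g i) (by
        rintro (i | i) (j | j)
        · show g (i + j) = g i * g j
          exact gadd i j
        · show B * g (j - i) = g i * (B * g j)
          calc B * g (j - i) = B * g (-i + j) := by rw [sub_eq_neg_add]
            _ = B * (g (-i) * g j) := by rw [gadd]
            _ = (B * g (-i)) * g j := by group
            _ = (g i * B) * g j := by rw [← gcomm]
            _ = g i * (B * g j) := by group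
        · show B * g (i + j) = (B * g i) * g j
          rw [gadd]; group
        · show g ((m : ℕ) + j - i) = (B * g i) * (B * g j)
          calc g ((m : ℕ) + j - i) = g (((m : ℕ) : ZMod (2 * m)) + (-i + j)) := by
                congr 1; ring
            _ = g ((m : ℕ) : ZMod (2 * m)) * (g (-i) * g j) := by rw [gadd, gadd]
            _ = (B * B) * (g (-i) * g j) := by rw [hB2']
            _ = B * ((B * g (-i)) * g j) := by group
            _ = B * ((g i * B) * g j) := by rw [← gcomm]
            _ = (B * g i) * (B * g j) := by group)
  have hinj : Function.Injective f := by
    rw [injective_iff_map_eq_one]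
    rintro (i | i) hx
    · have hx' : A ^ i.val = 1 := hx
      have hdvd := orderOf_dvd_of_pow_eq_one hx'
      rw [hA] at hdvd
      have hlt : i.val < 2 * m := ZMod.val_lt i
      have h0 : i.val = 0 := Nat.eq_zero_of_dvd_of_lt hdvd hlt
      have : i = 0 := by rwa [← ZMod.val_eq_zero]
      rw [this]
      rfl
    · exfalso
      have hx' : B * A ^ i.val = 1 := hx
      have hBi : B = (A ^ i.val)⁻¹ := eq_inv_of_mul_eq_one_left hx'
      have hcom : B * A = A * B := by
        rw [hBi]
        exact (((Commute.refl A).pow_left i.val).inv_left).eq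
      have hAA : A⁻¹ = A := by
        rw [← hBA, hcom]; group
      have hA2 : A * A = 1 := by
        nth_rewrite 2 [← hAA]
        rw [mul_inv_cancel]
      have hdvd : (2 * m) ∣ 2 := by
        have h := orderOf_dvd_of_pow_eq_one (x := A) (n := 2) (by rwa [pow_two])
        rwa [hA] at h
      have := Nat.le_of_dvd (by norm_num) hdvd
      omega
  have hcardQ : Nat.card (QuaternionGroup m) = 4 * m := by
    rw [Nat.card_eq_fintype_card, QuaternionGroup.card]
  have hrange : Nat.card f.range = 2 ^ ((Nat.card G).factorization 2) := by
    rw [← hcard, ← hcardQ]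
    exact (Nat.card_congr (MonoidHom.ofInjective hinj).toEquiv).symm
  let Q : Sylow 2 G := Sylow.ofCard f.range hrange
  have hQ : (Q : Subgroup G) = f.range := Sylow.coe_ofCard _ _
  exact ⟨(Sylow.equiv P Q).trans ((MulEquiv.subgroupCongr hQ).trans
    (MonoidHom.ofInjective hinj).symm)⟩



lemma finite_cover (hπsurj : Function.Surjective π)
    (hπker : π.ker = Subgroup.zpowers (z n α))
    (hz : orderOf (z n α) = 2) : Finite (Cover n α) := by
  have h1 : IsOfFinOrder (z n α) := by rw [← orderOf_pos_iff, hz]; norm_num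
  haveI hker : Finite π.ker := by rw [hπker]; exact h1.finite_zpowers.to_subtype
  haveI hq : Finite (Cover n α ⧸ π.ker) :=
    Finite.of_equiv _ (QuotientGroup.quotientKerEquivOfSurjective π hπsurj).symm.toEquiv
  exact Finite.of_equiv _ (Subgroup.groupEquivQuotientProdSubgroup (s := π.ker)).symm

lemma card_G (hπsurj : Function.Surjective π)
    (hπker : π.ker = Subgroup.zpowers (z n α))
    (hz : orderOf (z n α) = 2) :
    Nat.card ↥(Subgroup.comap π (alternatingGroup (Fin n))) =
      2 * Nat.card (alternatingGroup (Fin n)) := by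
  set K := alternatingGroup (Fin n) with hK
  set G' := Subgroup.comap π K with hG'
  let ψ : ↥G' →* Equiv.Perm (Fin n) := π.comp G'.subtype
  have hle : π.ker ≤ G' := by
    intro x hx
    rw [MonoidHom.mem_ker] at hx
    rw [hG', Subgroup.mem_comap, hx]
    exact one_mem K
  have hkerψ : ψ.ker = π.ker.subgroupOf G' := rfl
  have hrangeψ : ψ.range = K := by
    rw [MonoidHom.range_comp, Subgroup.range_subtype]
    exact Subgroup.map_comap_eq_self_of_surjective hπsurj K
  have e1 := Subgroup.card_eq_card_quotient_mul_card_subgroup ψ.ker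
  have e2 : Nat.card (↥G' ⧸ ψ.ker) = Nat.card K := by
    rw [Nat.card_congr (QuotientGroup.quotientKerEquivRange ψ).toEquiv, hrangeψ]
  have e3 : Nat.card ψ.ker = 2 := by
    rw [hkerψ, Nat.card_congr (Subgroup.subgroupOfEquivOfLe hle).toEquiv, hπker,
      Nat.card_zpowers, hz]
  rw [e1, e2, e3, mul_comm]

lemma conj_z (w : Cover n α) : w * z n α * w⁻¹ = z n α := by
  rw [← (zcomm w).eq]
  group

lemma case_main (hπsurj : Function.Surjective π)
    (hπker : π.ker = Subgroup.zpowers (z n α))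
    (hz : orderOf (z n α) = 2)
    (m k : ℕ) (hm : 2 ≤ m) (hmk : m = 2 ^ k)
    (A B : Cover n α)
    (hAm : A ^ m = z n α)
    (hBB : B * B = z n α)
    (hBAsq : (B * A) * (B * A) = z n α)
    (hA : π A ∈ alternatingGroup (Fin n))
    (hB : π B ∈ alternatingGroup (Fin n))
    (hcard : 4 * m =
      2 ^ ((Nat.card ↥(Subgroup.comap π (alternatingGroup (Fin n)))).factorization 2))
    (P : Sylow 2 ↥(Subgroup.comap π (alternatingGroup (Fin n)))) :
    Nonempty (↥(P : Subgroup ↥(Subgroup.comap π (alternatingGroup (Fin n)))) ≃*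
      QuaternionGroup m) := by
  haveI : Finite (Cover n α) := finite_cover π hπsurj hπker hz
  haveI : Fact (Nat.Prime 2) := ⟨Nat.prime_two⟩
  have hz1 : z n α ≠ 1 := by
    intro h
    rw [h, orderOf_one] at hz
    omega
  have hstep : B * A * B = z n α * A⁻¹ := by
    calc B * A * B = ((B * A) * (B * A)) * A⁻¹ := by group
      _ = z n α * A⁻¹ := by rw [hBAsq]
  have hBAB : B * A * B⁻¹ = A⁻¹ := by
    calc B * A * B⁻¹ = (B * A * B) * (B * B)⁻¹ := by group
      _ = (z n α * A⁻¹) * (z n α)⁻¹ := by rw [hstep, hBB]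
      _ = (A⁻¹ * z n α) * (z n α)⁻¹ := by rw [(zcomm A⁻¹).eq]
      _ = A⁻¹ := by group
  have hA2m : A ^ (2 * m) = 1 := by
    rw [show 2 * m = m * 2 by ring, pow_mul, hAm, zsq]
  have hAm1 : A ^ m ≠ 1 := by rw [hAm]; exact hz1
  have horder : orderOf A = 2 * m := by
    have h8 : orderOf A = 2 ^ (k + 1) := by
      refine orderOf_eq_prime_pow ?_ ?_
      · rw [← hmk]; exact hAm1
      · rw [pow_succ, ← hmk, mul_comm]; exact hA2m
    rw [h8, pow_succ, ← hmk, mul_comm]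
  have hAK : A ∈ Subgroup.comap π (alternatingGroup (Fin n)) := Subgroup.mem_comap.mpr hA
  have hBK : B ∈ Subgroup.comap π (alternatingGroup (Fin n)) := Subgroup.mem_comap.mpr hB
  refine sylow_iso hm ⟨A, hAK⟩ ⟨B, hBK⟩ ?_ ?_ ?_ hcard P
  · rw [← horder]
    exact (orderOf_injective (Subgroup.comap π (alternatingGroup (Fin n))).subtype
      (Subgroup.subtype_injective _) ⟨A, hAK⟩).symm
  · apply Subtype.ext
    rw [MulMemClass.coe_mul, SubgroupClass.coe_pow]
    show B * B = A ^ m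
    rw [hBB, hAm]
  · apply Subtype.ext
    rw [MulMemClass.coe_mul, MulMemClass.coe_mul, InvMemClass.coe_inv, InvMemClass.coe_inv]
    exact hBAB

end WithPi

lemma fact_pow_two (N v : ℕ) (h1 : 2 ^ v ∣ N) (h2 : ¬ 2 ^ (v + 1) ∣ N) (h0 : N ≠ 0) :
    N.factorization 2 = v := by
  have a1 : v ≤ N.factorization 2 :=
    (Nat.Prime.pow_dvd_iff_le_factorization Nat.prime_two h0).mp h1
  have a2 : ¬ (v + 1 ≤ N.factorization 2) := fun h =>
    h2 ((Nat.Prime.pow_dvd_iff_le_factorization Nat.prime_two h0).mpr h)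
  omega


lemma final4 (α : ℕ) (π : Cover 4 α →* Equiv.Perm (Fin 4))
    (hπt : ∀ j : Fin (4 - 1), π (t 4 α j) =
      Equiv.swap (Fin.castLE (by omega) j) (Fin.castLE (by omega) j.succ))
    (hπsurj : Function.Surjective π)
    (hπker : π.ker = Subgroup.zpowers (z 4 α))
    (hz : orderOf (z 4 α) = 2)
    (P : Sylow 2 ↥(Subgroup.comap π (alternatingGroup (Fin 4)))) :
    Nonempty (↥(P : Subgroup ↥(Subgroup.comap π (alternatingGroup (Fin 4)))) ≃*
      QuaternionGroup 2) := by
  have hAA : (t 4 α ⟨0, by norm_num⟩ * t 4 α ⟨2, by norm_num⟩) * (t 4 α ⟨0, by norm_num⟩ * t 4 α ⟨2, by norm_num⟩) = z 4 α := pair_sq _ _ (by decide)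
  have hAm : (t 4 α ⟨0, by norm_num⟩ * t 4 α ⟨2, by norm_num⟩) ^ 2 = z 4 α := by rw [pow_two]; exact hAA
  have hBB : (t 4 α ⟨1, by norm_num⟩ * (t 4 α ⟨0, by norm_num⟩ * t 4 α ⟨2, by norm_num⟩) * (t 4 α ⟨1, by norm_num⟩)⁻¹) * (t 4 α ⟨1, by norm_num⟩ * (t 4 α ⟨0, by norm_num⟩ * t 4 α ⟨2, by norm_num⟩) * (t 4 α ⟨1, by norm_num⟩)⁻¹) = z 4 α := by
    calc (t 4 α ⟨1, by norm_num⟩ * (t 4 α ⟨0, by norm_num⟩ * t 4 α ⟨2, by norm_num⟩) * (t 4 α ⟨1, by norm_num⟩)⁻¹) * (t 4 α ⟨1, by norm_num⟩ * (t 4 α ⟨0, by norm_num⟩ * t 4 α ⟨2, by norm_num⟩) * (t 4 α ⟨1, by norm_num⟩)⁻¹) = t 4 α ⟨1, by norm_num⟩ * ((t 4 α ⟨0, by norm_num⟩ * t 4 α ⟨2, by norm_num⟩) * (t 4 α ⟨0, by norm_num⟩ * t 4 α ⟨2, by norm_num⟩)) * (t 4 α ⟨1, by norm_num⟩)⁻¹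 := by group
      _ = t 4 α ⟨1, by norm_num⟩ * z 4 α * (t 4 α ⟨1, by norm_num⟩)⁻¹ := by rw [hAA]
      _ = z 4 α := conj_z _
  have hYY : ((t 4 α ⟨1, by norm_num⟩ * t 4 α ⟨2, by norm_num⟩ * t 4 α ⟨1, by norm_num⟩) * (t 4 α ⟨0, by norm_num⟩ * t 4 α ⟨2, by norm_num⟩) * (t 4 α ⟨1, by norm_num⟩ * t 4 α ⟨2, by norm_num⟩ * t 4 α ⟨1, by norm_num⟩)⁻¹) * ((t 4 α ⟨1, by norm_num⟩ * t 4 α ⟨2, by norm_num⟩ * t 4 α ⟨1, by norm_num⟩) * (t 4 α ⟨0, by norm_num⟩ * t 4 α ⟨2, by norm_num⟩) * (t 4 α ⟨1, by norm_num⟩ * t 4 α ⟨2, by norm_num⟩ * t 4 α ⟨1, by norm_num⟩)⁻¹) = z 4 α := by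
    calc ((t 4 α ⟨1, by norm_num⟩ * t 4 α ⟨2, by norm_num⟩ * t 4 α ⟨1, by norm_num⟩) * (t 4 α ⟨0, by norm_num⟩ * t 4 α ⟨2, by norm_num⟩) * (t 4 α ⟨1, by norm_num⟩ * t 4 α ⟨2, by norm_num⟩ * t 4 α ⟨1, by norm_num⟩)⁻¹) * ((t 4 α ⟨1, by norm_num⟩ * t 4 α ⟨2, by norm_num⟩ * t 4 α ⟨1, by norm_num⟩) * (t 4 α ⟨0, by norm_num⟩ * t 4 α ⟨2, by norm_num⟩) * (t 4 α ⟨1, by norm_num⟩ * t 4 α ⟨2, by norm_num⟩ * t 4 α ⟨1, by norm_num⟩)⁻¹) = (t 4 α ⟨1, by norm_num⟩ * t 4 α ⟨2, by norm_num⟩ * t 4 α ⟨1, by norm_num⟩) * ((t 4 α ⟨0, by norm_num⟩ * t 4 α ⟨2, by norm_num⟩) * (t 4 α ⟨0, by norm_num⟩ * t 4 α ⟨2, by norm_num⟩)) * (t 4 α ⟨1, by norm_num⟩ * t 4 α ⟨2, by norm_num⟩ * t 4 α ⟨1, by norm_num⟩)⁻¹ := by group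
      _ = (t 4 α ⟨1, by norm_num⟩ * t 4 α ⟨2, by norm_num⟩ * t 4 α ⟨1, by norm_num⟩) * z 4 α * (t 4 α ⟨1, by norm_num⟩ * t 4 α ⟨2, by norm_num⟩ * t 4 α ⟨1, by norm_num⟩)⁻¹ := by rw [hAA]
      _ = z 4 α := conj_z _
  have hBAsq : ((t 4 α ⟨1, by norm_num⟩ * (t 4 α ⟨0, by norm_num⟩ * t 4 α ⟨2, by norm_num⟩) * (t 4 α ⟨1, by norm_num⟩)⁻¹) * (t 4 α ⟨0, by norm_num⟩ * t 4 α ⟨2, by norm_num⟩)) * ((t 4 α ⟨1, by norm_num⟩ * (t 4 α ⟨0, by norm_num⟩ * t 4 α ⟨2, by norm_num⟩) * (t 4 α ⟨1, by norm_num⟩)⁻¹) * (t 4 α ⟨0, by norm_num⟩ * t 4 α ⟨2, by norm_num⟩)) = z 4 α := by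
    have hpi : π ((t 4 α ⟨1, by norm_num⟩ * (t 4 α ⟨0, by norm_num⟩ * t 4 α ⟨2, by norm_num⟩) * (t 4 α ⟨1, by norm_num⟩)⁻¹) * (t 4 α ⟨0, by norm_num⟩ * t 4 α ⟨2, by norm_num⟩)) = π ((t 4 α ⟨1, by norm_num⟩ * t 4 α ⟨2, by norm_num⟩ * t 4 α ⟨1, by norm_num⟩) * (t 4 α ⟨0, by norm_num⟩ * t 4 α ⟨2, by norm_num⟩) * (t 4 α ⟨1, by norm_num⟩ * t 4 α ⟨2, by norm_num⟩ * t 4 α ⟨1, by norm_num⟩)⁻¹) := by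
      simp only [map_mul, map_inv, hπt]
      decide
    exact (sq_eq π hπker _ _ hpi).trans hYY
  have hA : π (t 4 α ⟨0, by norm_num⟩ * t 4 α ⟨2, by norm_num⟩) ∈ alternatingGroup (Fin 4) := by
    rw [Equiv.Perm.mem_alternatingGroup]
    simp only [map_mul, map_inv, hπt]
    decide
  have hB : π (t 4 α ⟨1, by norm_num⟩ * (t 4 α ⟨0, by norm_num⟩ * t 4 α ⟨2, by norm_num⟩) * (t 4 α ⟨1, by norm_num⟩)⁻¹) ∈ alternatingGroup (Fin 4) := by
    rw [Equiv.Perm.mem_alternatingGroup]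
    simp only [map_mul, map_inv, hπt]
    decide
  have hcG := card_G π hπsurj hπker hz
  have hK : Nat.card (alternatingGroup (Fin 4)) = 12 := by
    have h2 := two_mul_card_alternatingGroup (α := Fin 4)
    rw [Fintype.card_perm, Fintype.card_fin, ← Nat.card_eq_fintype_card] at h2
    have h3 : Nat.factorial 4 = 24 := rfl
    rw [h3] at h2
    omega
  have hfac : (24 : ℕ).factorization 2 = 3 :=
    fact_pow_two _ _ (by norm_num) (by norm_num) (by norm_num)
  have hcard : 4 * 2 =
      2 ^ ((Nat.card ↥(Subgroup.comap π (alternatingGroup (Fin 4)))).factorization 2) := by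
    rw [hcG, hK]
    norm_num [hfac]
  exact case_main π hπsurj hπker hz 2 1 (by norm_num) (by norm_num)
    (t 4 α ⟨0, by norm_num⟩ * t 4 α ⟨2, by norm_num⟩) (t 4 α ⟨1, by norm_num⟩ * (t 4 α ⟨0, by norm_num⟩ * t 4 α ⟨2, by norm_num⟩) * (t 4 α ⟨1, by norm_num⟩)⁻¹) hAm hBB hBAsq hA hB hcard P

lemma final5 (α : ℕ) (π : Cover 5 α →* Equiv.Perm (Fin 5))
    (hπt : ∀ j : Fin (5 - 1), π (t 5 α j) =
      Equiv.swap (Fin.castLE (by omega) j) (Fin.castLE (by omega) j.succ))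
    (hπsurj : Function.Surjective π)
    (hπker : π.ker = Subgroup.zpowers (z 5 α))
    (hz : orderOf (z 5 α) = 2)
    (P : Sylow 2 ↥(Subgroup.comap π (alternatingGroup (Fin 5)))) :
    Nonempty (↥(P : Subgroup ↥(Subgroup.comap π (alternatingGroup (Fin 5)))) ≃*
      QuaternionGroup 2) := by
  have hAA : (t 5 α ⟨0, by norm_num⟩ * t 5 α ⟨2, by norm_num⟩) * (t 5 α ⟨0, by norm_num⟩ * t 5 α ⟨2, by norm_num⟩) = z 5 α := pair_sq _ _ (by decide)
  have hAm : (t 5 α ⟨0, by norm_num⟩ * t 5 α ⟨2, by norm_num⟩) ^ 2 = z 5 α := by rw [pow_two]; exact hAA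
  have hBB : (t 5 α ⟨1, by norm_num⟩ * (t 5 α ⟨0, by norm_num⟩ * t 5 α ⟨2, by norm_num⟩) * (t 5 α ⟨1, by norm_num⟩)⁻¹) * (t 5 α ⟨1, by norm_num⟩ * (t 5 α ⟨0, by norm_num⟩ * t 5 α ⟨2, by norm_num⟩) * (t 5 α ⟨1, by norm_num⟩)⁻¹) = z 5 α := by
    calc (t 5 α ⟨1, by norm_num⟩ * (t 5 α ⟨0, by norm_num⟩ * t 5 α ⟨2, by norm_num⟩) * (t 5 α ⟨1, by norm_num⟩)⁻¹) * (t 5 α ⟨1, by norm_num⟩ * (t 5 α ⟨0, by norm_num⟩ * t 5 α ⟨2, by norm_num⟩) * (t 5 α ⟨1, by norm_num⟩)⁻¹) = t 5 α ⟨1, by norm_num⟩ * ((t 5 α ⟨0, by norm_num⟩ * t 5 α ⟨2, by norm_num⟩) * (t 5 α ⟨0, by norm_num⟩ * t 5 α ⟨2, by norm_num⟩)) * (t 5 α ⟨1, by norm_num⟩)⁻¹ := by group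
      _ = t 5 α ⟨1, by norm_num⟩ * z 5 α * (t 5 α ⟨1, by norm_num⟩)⁻¹ := by rw [hAA]
      _ = z 5 α := conj_z _
  have hYY : ((t 5 α ⟨1, by norm_num⟩ * t 5 α ⟨2, by norm_num⟩ * t 5 α ⟨1, by norm_num⟩) * (t 5 α ⟨0, by norm_num⟩ * t 5 α ⟨2, by norm_num⟩) * (t 5 α ⟨1, by norm_num⟩ * t 5 α ⟨2, by norm_num⟩ * t 5 α ⟨1, by norm_num⟩)⁻¹) * ((t 5 α ⟨1, by norm_num⟩ * t 5 α ⟨2, by norm_num⟩ * t 5 α ⟨1, by norm_num⟩) * (t 5 α ⟨0, by norm_num⟩ * t 5 α ⟨2, by norm_num⟩) * (t 5 α ⟨1, by norm_num⟩ * t 5 α ⟨2, by norm_num⟩ * t 5 α ⟨1, by norm_num⟩)⁻¹) = z 5 α := by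
    calc ((t 5 α ⟨1, by norm_num⟩ * t 5 α ⟨2, by norm_num⟩ * t 5 α ⟨1, by norm_num⟩) * (t 5 α ⟨0, by norm_num⟩ * t 5 α ⟨2, by norm_num⟩) * (t 5 α ⟨1, by norm_num⟩ * t 5 α ⟨2, by norm_num⟩ * t 5 α ⟨1, by norm_num⟩)⁻¹) * ((t 5 α ⟨1, by norm_num⟩ * t 5 α ⟨2, by norm_num⟩ * t 5 α ⟨1, by norm_num⟩) * (t 5 α ⟨0, by norm_num⟩ * t 5 α ⟨2, by norm_num⟩) * (t 5 α ⟨1, by norm_num⟩ * t 5 α ⟨2, by norm_num⟩ * t 5 α ⟨1, by norm_num⟩)⁻¹) = (t 5 α ⟨1, by norm_num⟩ * t 5 α ⟨2, by norm_num⟩ * t 5 α ⟨1, by norm_num⟩) * ((t 5 α ⟨0, by norm_num⟩ * t 5 α ⟨2, by norm_num⟩) * (t 5 α ⟨0, by norm_num⟩ * t 5 α ⟨2, by norm_num⟩)) * (t 5 α ⟨1, by norm_num⟩ * t 5 α ⟨2, by norm_num⟩ * t 5 α ⟨1, by norm_num⟩)⁻¹ := by group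
      _ = (t 5 α ⟨1, by norm_num⟩ * t 5 α ⟨2, by norm_num⟩ * t 5 α ⟨1, by norm_num⟩) * z 5 α * (t 5 α ⟨1, by norm_num⟩ * t 5 α ⟨2, by norm_num⟩ * t 5 α ⟨1, by norm_num⟩)⁻¹ := by rw [hAA]
      _ = z 5 α := conj_z _
  have hBAsq : ((t 5 α ⟨1, by norm_num⟩ * (t 5 α ⟨0, by norm_num⟩ * t 5 α ⟨2, by norm_num⟩) * (t 5 α ⟨1, by norm_num⟩)⁻¹) * (t 5 α ⟨0, by norm_num⟩ * t 5 α ⟨2, by norm_num⟩)) * ((t 5 α ⟨1, by norm_num⟩ * (t 5 α ⟨0, by norm_num⟩ * t 5 α ⟨2, by norm_num⟩) * (t 5 α ⟨1, by norm_num⟩)⁻¹) * (t 5 α ⟨0, by norm_num⟩ * t 5 α ⟨2, by norm_num⟩)) = z 5 α := by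
    have hpi : π ((t 5 α ⟨1, by norm_num⟩ * (t 5 α ⟨0, by norm_num⟩ * t 5 α ⟨2, by norm_num⟩) * (t 5 α ⟨1, by norm_num⟩)⁻¹) * (t 5 α ⟨0, by norm_num⟩ * t 5 α ⟨2, by norm_num⟩)) = π ((t 5 α ⟨1, by norm_num⟩ * t 5 α ⟨2, by norm_num⟩ * t 5 α ⟨1, by norm_num⟩) * (t 5 α ⟨0, by norm_num⟩ * t 5 α ⟨2, by norm_num⟩) * (t 5 α ⟨1, by norm_num⟩ * t 5 α ⟨2, by norm_num⟩ * t 5 α ⟨1, by norm_num⟩)⁻¹) := by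
      simp only [map_mul, map_inv, hπt]
      decide
    exact (sq_eq π hπker _ _ hpi).trans hYY
  have hA : π (t 5 α ⟨0, by norm_num⟩ * t 5 α ⟨2, by norm_num⟩) ∈ alternatingGroup (Fin 5) := by
    rw [Equiv.Perm.mem_alternatingGroup]
    simp only [map_mul, map_inv, hπt]
    decide
  have hB : π (t 5 α ⟨1, by norm_num⟩ * (t 5 α ⟨0, by norm_num⟩ * t 5 α ⟨2, by norm_num⟩) * (t 5 α ⟨1, by norm_num⟩)⁻¹) ∈ alternatingGroup (Fin 5) := by
    rw [Equiv.Perm.mem_alternatingGroup]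
    simp only [map_mul, map_inv, hπt]
    decide
  have hcG := card_G π hπsurj hπker hz
  have hK : Nat.card (alternatingGroup (Fin 5)) = 60 := by
    have h2 := two_mul_card_alternatingGroup (α := Fin 5)
    rw [Fintype.card_perm, Fintype.card_fin, ← Nat.card_eq_fintype_card] at h2
    have h3 : Nat.factorial 5 = 120 := rfl
    rw [h3] at h2
    omega
  have hfac : (120 : ℕ).factorization 2 = 3 :=
    fact_pow_two _ _ (by norm_num) (by norm_num) (by norm_num)
  have hcard : 4 * 2 =
      2 ^ ((Nat.card ↥(Subgroup.comap π (alternatingGroup (Fin 5)))).factorization 2) := by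
    rw [hcG, hK]
    norm_num [hfac]
  exact case_main π hπsurj hπker hz 2 1 (by norm_num) (by norm_num)
    (t 5 α ⟨0, by norm_num⟩ * t 5 α ⟨2, by norm_num⟩) (t 5 α ⟨1, by norm_num⟩ * (t 5 α ⟨0, by norm_num⟩ * t 5 α ⟨2, by norm_num⟩) * (t 5 α ⟨1, by norm_num⟩)⁻¹) hAm hBB hBAsq hA hB hcard P

lemma final6 (α : ℕ) (π : Cover 6 α →* Equiv.Perm (Fin 6))
    (hπt : ∀ j : Fin (6 - 1), π (t 6 α j) =
      Equiv.swap (Fin.castLE (by omega) j) (Fin.castLE (by omega) j.succ))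
    (hπsurj : Function.Surjective π)
    (hπker : π.ker = Subgroup.zpowers (z 6 α))
    (hz : orderOf (z 6 α) = 2)
    (P : Sylow 2 ↥(Subgroup.comap π (alternatingGroup (Fin 6)))) :
    Nonempty (↥(P : Subgroup ↥(Subgroup.comap π (alternatingGroup (Fin 6)))) ≃*
      QuaternionGroup 4) := by
  have hBB0 : (t 6 α ⟨0, by norm_num⟩ * t 6 α ⟨2, by norm_num⟩) * (t 6 α ⟨0, by norm_num⟩ * t 6 α ⟨2, by norm_num⟩) = z 6 α := pair_sq _ _ (by decide)
  have hY2 : (t 6 α ⟨1, by norm_num⟩ * (t 6 α ⟨0, by norm_num⟩ * t 6 α ⟨2, by norm_num⟩) * (t 6 α ⟨1, by norm_num⟩)⁻¹) * (t 6 α ⟨1, by norm_num⟩ * (t 6 α ⟨0, by norm_num⟩ * t 6 α ⟨2, by norm_num⟩) * (t 6 α ⟨1, by norm_num⟩)⁻¹) = z 6 α := by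
    calc (t 6 α ⟨1, by norm_num⟩ * (t 6 α ⟨0, by norm_num⟩ * t 6 α ⟨2, by norm_num⟩) * (t 6 α ⟨1, by norm_num⟩)⁻¹) * (t 6 α ⟨1, by norm_num⟩ * (t 6 α ⟨0, by norm_num⟩ * t 6 α ⟨2, by norm_num⟩) * (t 6 α ⟨1, by norm_num⟩)⁻¹) = t 6 α ⟨1, by norm_num⟩ * ((t 6 α ⟨0, by norm_num⟩ * t 6 α ⟨2, by norm_num⟩) * (t 6 α ⟨0, by norm_num⟩ * t 6 α ⟨2, by norm_num⟩)) * (t 6 α ⟨1, by norm_num⟩)⁻¹ := by group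
      _ = t 6 α ⟨1, by norm_num⟩ * z 6 α * (t 6 α ⟨1, by norm_num⟩)⁻¹ := by rw [hBB0]
      _ = z 6 α := conj_z _
  have hA2 : ((t 6 α ⟨2, by norm_num⟩ * t 6 α ⟨1, by norm_num⟩ * t 6 α ⟨0, by norm_num⟩ * t 6 α ⟨4, by norm_num⟩) * (t 6 α ⟨2, by norm_num⟩ * t 6 α ⟨1, by norm_num⟩ * t 6 α ⟨0, by norm_num⟩ * t 6 α ⟨4, by norm_num⟩)) * ((t 6 α ⟨2, by norm_num⟩ * t 6 α ⟨1, by norm_num⟩ * t 6 α ⟨0, by norm_num⟩ * t 6 α ⟨4, by norm_num⟩) * (t 6 α ⟨2, by norm_num⟩ * t 6 α ⟨1, by norm_num⟩ * t 6 α ⟨0, by norm_num⟩ * t 6 α ⟨4, by norm_num⟩)) = z 6 α := by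
    have hpi : π ((t 6 α ⟨2, by norm_num⟩ * t 6 α ⟨1, by norm_num⟩ * t 6 α ⟨0, by norm_num⟩ * t 6 α ⟨4, by norm_num⟩) * (t 6 α ⟨2, by norm_num⟩ * t 6 α ⟨1, by norm_num⟩ * t 6 α ⟨0, by norm_num⟩ * t 6 α ⟨4, by norm_num⟩)) = π (t 6 α ⟨1, by norm_num⟩ * (t 6 α ⟨0, by norm_num⟩ * t 6 α ⟨2, by norm_num⟩) * (t 6 α ⟨1, by norm_num⟩)⁻¹) := by
      simp only [map_mul, map_inv, hπt]
      decide
    exact (sq_eq π hπker _ _ hpi).trans hY2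
  have hAm : (t 6 α ⟨2, by norm_num⟩ * t 6 α ⟨1, by norm_num⟩ * t 6 α ⟨0, by norm_num⟩ * t 6 α ⟨4, by norm_num⟩) ^ 4 = z 6 α := by
    have h4 : (t 6 α ⟨2, by norm_num⟩ * t 6 α ⟨1, by norm_num⟩ * t 6 α ⟨0, by norm_num⟩ * t 6 α ⟨4, by norm_num⟩) ^ (2 * 2) = z 6 α := by
      rw [pow_mul, pow_two, pow_two]
      exact hA2
    exact h4
  have hYY : ((t 6 α ⟨1, by norm_num⟩ * t 6 α ⟨2, by norm_num⟩ * t 6 α ⟨3, by norm_num⟩ * t 6 α ⟨2, by norm_num⟩ * t 6 α ⟨3, by norm_num⟩ * t 6 α ⟨4, by norm_num⟩ * t 6 α ⟨3, by norm_num⟩) * (t 6 α ⟨0, by norm_num⟩ * t 6 α ⟨2, by norm_num⟩) * (t 6 α ⟨1, by norm_num⟩ * t 6 α ⟨2, by norm_num⟩ * t 6 α ⟨3, by norm_num⟩ * t 6 α ⟨2, by norm_num⟩ * t 6 α ⟨3, by norm_num⟩ * t 6 α ⟨4, by norm_num⟩ * t 6 α ⟨3, by norm_num⟩)⁻¹)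 * ((t 6 α ⟨1, by norm_num⟩ * t 6 α ⟨2, by norm_num⟩ * t 6 α ⟨3, by norm_num⟩ * t 6 α ⟨2, by norm_num⟩ * t 6 α ⟨3, by norm_num⟩ * t 6 α ⟨4, by norm_num⟩ * t 6 α ⟨3, by norm_num⟩) * (t 6 α ⟨0, by norm_num⟩ * t 6 α ⟨2, by norm_num⟩) * (t 6 α ⟨1, by norm_num⟩ * t 6 α ⟨2, by norm_num⟩ * t 6 α ⟨3, by norm_num⟩ * t 6 α ⟨2, by norm_num⟩ * t 6 α ⟨3, by norm_num⟩ * t 6 α ⟨4, by norm_num⟩ * t 6 α ⟨3, by norm_num⟩)⁻¹) = z 6 α := by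
    calc ((t 6 α ⟨1, by norm_num⟩ * t 6 α ⟨2, by norm_num⟩ * t 6 α ⟨3, by norm_num⟩ * t 6 α ⟨2, by norm_num⟩ * t 6 α ⟨3, by norm_num⟩ * t 6 α ⟨4, by norm_num⟩ * t 6 α ⟨3, by norm_num⟩) * (t 6 α ⟨0, by norm_num⟩ * t 6 α ⟨2, by norm_num⟩) * (t 6 α ⟨1, by norm_num⟩ * t 6 α ⟨2, by norm_num⟩ * t 6 α ⟨3, by norm_num⟩ * t 6 α ⟨2, by norm_num⟩ * t 6 α ⟨3, by norm_num⟩ * t 6 α ⟨4, by norm_num⟩ * t 6 α ⟨3, by norm_num⟩)⁻¹) * ((t 6 α ⟨1, by norm_num⟩ * t 6 α ⟨2, by norm_num⟩ * t 6 α ⟨3, by norm_num⟩ * t 6 α ⟨2, by norm_num⟩ * t 6 α ⟨3, by norm_num⟩ * t 6 α ⟨4, by norm_num⟩ * t 6 α ⟨3, by norm_num⟩) * (t 6 α ⟨0, by norm_num⟩ * t 6 α ⟨2, by norm_num⟩) * (t 6 α ⟨1, by norm_num⟩ * t 6 α ⟨2, by norm_num⟩ * t 6 α ⟨3, by norm_num⟩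 * t 6 α ⟨2, by norm_num⟩ * t 6 α ⟨3, by norm_num⟩ * t 6 α ⟨4, by norm_num⟩ * t 6 α ⟨3, by norm_num⟩)⁻¹) = (t 6 α ⟨1, by norm_num⟩ * t 6 α ⟨2, by norm_num⟩ * t 6 α ⟨3, by norm_num⟩ * t 6 α ⟨2, by norm_num⟩ * t 6 α ⟨3, by norm_num⟩ * t 6 α ⟨4, by norm_num⟩ * t 6 α ⟨3, by norm_num⟩) * ((t 6 α ⟨0, by norm_num⟩ * t 6 α ⟨2, by norm_num⟩) * (t 6 α ⟨0, by norm_num⟩ * t 6 α ⟨2, by norm_num⟩)) * (t 6 α ⟨1, by norm_num⟩ * t 6 α ⟨2, by norm_num⟩ * t 6 α ⟨3, by norm_num⟩ * t 6 α ⟨2, by norm_num⟩ * t 6 α ⟨3, by norm_num⟩ * t 6 α ⟨4, by norm_num⟩ * t 6 α ⟨3, by norm_num⟩)⁻¹ := by group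
      _ = (t 6 α ⟨1, by norm_num⟩ * t 6 α ⟨2, by norm_num⟩ * t 6 α ⟨3, by norm_num⟩ * t 6 α ⟨2, by norm_num⟩ * t 6 α ⟨3, by norm_num⟩ * t 6 α ⟨4, by norm_num⟩ * t 6 α ⟨3, by norm_num⟩) * z 6 α * (t 6 α ⟨1, by norm_num⟩ * t 6 α ⟨2, by norm_num⟩ * t 6 α ⟨3, by norm_num⟩ * t 6 α ⟨2, by norm_num⟩ * t 6 α ⟨3, by norm_num⟩ * t 6 α ⟨4, by norm_num⟩ * t 6 α ⟨3, by norm_num⟩)⁻¹ := by rw [hBB0]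
      _ = z 6 α := conj_z _
  have hBAsq : ((t 6 α ⟨0, by norm_num⟩ * t 6 α ⟨2, by norm_num⟩) * (t 6 α ⟨2, by norm_num⟩ * t 6 α ⟨1, by norm_num⟩ * t 6 α ⟨0, by norm_num⟩ * t 6 α ⟨4, by norm_num⟩)) * ((t 6 α ⟨0, by norm_num⟩ * t 6 α ⟨2, by norm_num⟩) * (t 6 α ⟨2, by norm_num⟩ * t 6 α ⟨1, by norm_num⟩ * t 6 α ⟨0, by norm_num⟩ * t 6 α ⟨4, by norm_num⟩)) = z 6 α := by
    have hpi : π ((t 6 α ⟨0, by norm_num⟩ * t 6 α ⟨2, by norm_num⟩) * (t 6 α ⟨2, by norm_num⟩ * t 6 α ⟨1, by norm_num⟩ * t 6 α ⟨0, by norm_num⟩ * t 6 α ⟨4, by norm_num⟩)) = π ((t 6 α ⟨1, by norm_num⟩ * t 6 α ⟨2, by norm_num⟩ * t 6 α ⟨3, by norm_num⟩ * t 6 α ⟨2, by norm_num⟩ * t 6 α ⟨3, by norm_num⟩ * t 6 α ⟨4, by norm_num⟩ * t 6 α ⟨3, by norm_num⟩) * (t 6 α ⟨0, by norm_num⟩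 * t 6 α ⟨2, by norm_num⟩) * (t 6 α ⟨1, by norm_num⟩ * t 6 α ⟨2, by norm_num⟩ * t 6 α ⟨3, by norm_num⟩ * t 6 α ⟨2, by norm_num⟩ * t 6 α ⟨3, by norm_num⟩ * t 6 α ⟨4, by norm_num⟩ * t 6 α ⟨3, by norm_num⟩)⁻¹) := by
      simp only [map_mul, map_inv, hπt]
      decide
    exact (sq_eq π hπker _ _ hpi).trans hYY
  have hA : π (t 6 α ⟨2, by norm_num⟩ * t 6 α ⟨1, by norm_num⟩ * t 6 α ⟨0, by norm_num⟩ * t 6 α ⟨4, by norm_num⟩) ∈ alternatingGroup (Fin 6) := by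
    rw [Equiv.Perm.mem_alternatingGroup]
    simp only [map_mul, map_inv, hπt]
    decide
  have hB : π (t 6 α ⟨0, by norm_num⟩ * t 6 α ⟨2, by norm_num⟩) ∈ alternatingGroup (Fin 6) := by
    rw [Equiv.Perm.mem_alternatingGroup]
    simp only [map_mul, map_inv, hπt]
    decide
  have hcG := card_G π hπsurj hπker hz
  have hK : Nat.card (alternatingGroup (Fin 6)) = 360 := by
    have h2 := two_mul_card_alternatingGroup (α := Fin 6)
    rw [Fintype.card_perm, Fintype.card_fin, ← Nat.card_eq_fintype_card] at h2
    have h3 : Nat.factorial 6 = 720 := rfl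
    rw [h3] at h2
    omega
  have hfac : (720 : ℕ).factorization 2 = 4 :=
    fact_pow_two _ _ (by norm_num) (by norm_num) (by norm_num)
  have hcard : 4 * 4 =
      2 ^ ((Nat.card ↥(Subgroup.comap π (alternatingGroup (Fin 6)))).factorization 2) := by
    rw [hcG, hK]
    norm_num [hfac]
  exact case_main π hπsurj hπker hz 4 2 (by norm_num) (by norm_num)
    (t 6 α ⟨2, by norm_num⟩ * t 6 α ⟨1, by norm_num⟩ * t 6 α ⟨0, by norm_num⟩ * t 6 α ⟨4, by norm_num⟩) (t 6 α ⟨0, by norm_num⟩ * t 6 α ⟨2, by norm_num⟩) hAm hBB0 hBAsq hA hB hcard P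

lemma final7 (α : ℕ) (π : Cover 7 α →* Equiv.Perm (Fin 7))
    (hπt : ∀ j : Fin (7 - 1), π (t 7 α j) =
      Equiv.swap (Fin.castLE (by omega) j) (Fin.castLE (by omega) j.succ))
    (hπsurj : Function.Surjective π)
    (hπker : π.ker = Subgroup.zpowers (z 7 α))
    (hz : orderOf (z 7 α) = 2)
    (P : Sylow 2 ↥(Subgroup.comap π (alternatingGroup (Fin 7)))) :
    Nonempty (↥(P : Subgroup ↥(Subgroup.comap π (alternatingGroup (Fin 7)))) ≃*
      QuaternionGroup 4) := by
  have hBB0 : (t 7 α ⟨0, by norm_num⟩ * t 7 α ⟨2, by norm_num⟩) * (t 7 α ⟨0, by norm_num⟩ * t 7 α ⟨2, by norm_num⟩) = z 7 α := pair_sq _ _ (by decide)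
  have hY2 : (t 7 α ⟨1, by norm_num⟩ * (t 7 α ⟨0, by norm_num⟩ * t 7 α ⟨2, by norm_num⟩) * (t 7 α ⟨1, by norm_num⟩)⁻¹) * (t 7 α ⟨1, by norm_num⟩ * (t 7 α ⟨0, by norm_num⟩ * t 7 α ⟨2, by norm_num⟩) * (t 7 α ⟨1, by norm_num⟩)⁻¹) = z 7 α := by
    calc (t 7 α ⟨1, by norm_num⟩ * (t 7 α ⟨0, by norm_num⟩ * t 7 α ⟨2, by norm_num⟩) * (t 7 α ⟨1, by norm_num⟩)⁻¹) * (t 7 α ⟨1, by norm_num⟩ * (t 7 α ⟨0, by norm_num⟩ * t 7 α ⟨2, by norm_num⟩) * (t 7 α ⟨1, by norm_num⟩)⁻¹) = t 7 α ⟨1, by norm_num⟩ * ((t 7 α ⟨0, by norm_num⟩ * t 7 α ⟨2, by norm_num⟩) * (t 7 α ⟨0, by norm_num⟩ * t 7 α ⟨2, by norm_num⟩)) * (t 7 α ⟨1, by norm_num⟩)⁻¹ := by group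
      _ = t 7 α ⟨1, by norm_num⟩ * z 7 α * (t 7 α ⟨1, by norm_num⟩)⁻¹ := by rw [hBB0]
      _ = z 7 α := conj_z _
  have hA2 : ((t 7 α ⟨2, by norm_num⟩ * t 7 α ⟨1, by norm_num⟩ * t 7 α ⟨0, by norm_num⟩ * t 7 α ⟨4, by norm_num⟩) * (t 7 α ⟨2, by norm_num⟩ * t 7 α ⟨1, by norm_num⟩ * t 7 α ⟨0, by norm_num⟩ * t 7 α ⟨4, by norm_num⟩)) * ((t 7 α ⟨2, by norm_num⟩ * t 7 α ⟨1, by norm_num⟩ * t 7 α ⟨0, by norm_num⟩ * t 7 α ⟨4, by norm_num⟩) * (t 7 α ⟨2, by norm_num⟩ * t 7 α ⟨1, by norm_num⟩ * t 7 α ⟨0, by norm_num⟩ * t 7 α ⟨4, by norm_num⟩)) = z 7 α := by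
    have hpi : π ((t 7 α ⟨2, by norm_num⟩ * t 7 α ⟨1, by norm_num⟩ * t 7 α ⟨0, by norm_num⟩ * t 7 α ⟨4, by norm_num⟩) * (t 7 α ⟨2, by norm_num⟩ * t 7 α ⟨1, by norm_num⟩ * t 7 α ⟨0, by norm_num⟩ * t 7 α ⟨4, by norm_num⟩)) = π (t 7 α ⟨1, by norm_num⟩ * (t 7 α ⟨0, by norm_num⟩ * t 7 α ⟨2, by norm_num⟩) * (t 7 α ⟨1, by norm_num⟩)⁻¹) := by
      simp only [map_mul, map_inv, hπt]
      decide
    exact (sq_eq π hπker _ _ hpi).trans hY2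
  have hAm : (t 7 α ⟨2, by norm_num⟩ * t 7 α ⟨1, by norm_num⟩ * t 7 α ⟨0, by norm_num⟩ * t 7 α ⟨4, by norm_num⟩) ^ 4 = z 7 α := by
    have h4 : (t 7 α ⟨2, by norm_num⟩ * t 7 α ⟨1, by norm_num⟩ * t 7 α ⟨0, by norm_num⟩ * t 7 α ⟨4, by norm_num⟩) ^ (2 * 2) = z 7 α := by
      rw [pow_mul, pow_two, pow_two]
      exact hA2
    exact h4
  have hYY : ((t 7 α ⟨1, by norm_num⟩ * t 7 α ⟨2, by norm_num⟩ * t 7 α ⟨3, by norm_num⟩ * t 7 α ⟨2, by norm_num⟩ * t 7 α ⟨3, by norm_num⟩ * t 7 α ⟨4, by norm_num⟩ * t 7 α ⟨3, by norm_num⟩) * (t 7 α ⟨0, by norm_num⟩ * t 7 α ⟨2, by norm_num⟩) * (t 7 α ⟨1, by norm_num⟩ * t 7 α ⟨2, by norm_num⟩ * t 7 α ⟨3, by norm_num⟩ * t 7 α ⟨2, by norm_num⟩ * t 7 α ⟨3, by norm_num⟩ * t 7 α ⟨4, by norm_num⟩ * t 7 α ⟨3, by norm_num⟩)⁻¹)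 * ((t 7 α ⟨1, by norm_num⟩ * t 7 α ⟨2, by norm_num⟩ * t 7 α ⟨3, by norm_num⟩ * t 7 α ⟨2, by norm_num⟩ * t 7 α ⟨3, by norm_num⟩ * t 7 α ⟨4, by norm_num⟩ * t 7 α ⟨3, by norm_num⟩) * (t 7 α ⟨0, by norm_num⟩ * t 7 α ⟨2, by norm_num⟩) * (t 7 α ⟨1, by norm_num⟩ * t 7 α ⟨2, by norm_num⟩ * t 7 α ⟨3, by norm_num⟩ * t 7 α ⟨2, by norm_num⟩ * t 7 α ⟨3, by norm_num⟩ * t 7 α ⟨4, by norm_num⟩ * t 7 α ⟨3, by norm_num⟩)⁻¹) = z 7 α := by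
    calc ((t 7 α ⟨1, by norm_num⟩ * t 7 α ⟨2, by norm_num⟩ * t 7 α ⟨3, by norm_num⟩ * t 7 α ⟨2, by norm_num⟩ * t 7 α ⟨3, by norm_num⟩ * t 7 α ⟨4, by norm_num⟩ * t 7 α ⟨3, by norm_num⟩) * (t 7 α ⟨0, by norm_num⟩ * t 7 α ⟨2, by norm_num⟩) * (t 7 α ⟨1, by norm_num⟩ * t 7 α ⟨2, by norm_num⟩ * t 7 α ⟨3, by norm_num⟩ * t 7 α ⟨2, by norm_num⟩ * t 7 α ⟨3, by norm_num⟩ * t 7 α ⟨4, by norm_num⟩ * t 7 α ⟨3, by norm_num⟩)⁻¹) * ((t 7 α ⟨1, by norm_num⟩ * t 7 α ⟨2, by norm_num⟩ * t 7 α ⟨3, by norm_num⟩ * t 7 α ⟨2, by norm_num⟩ * t 7 α ⟨3, by norm_num⟩ * t 7 α ⟨4, by norm_num⟩ * t 7 α ⟨3, by norm_num⟩) * (t 7 α ⟨0, by norm_num⟩ * t 7 α ⟨2, by norm_num⟩) * (t 7 α ⟨1, by norm_num⟩ * t 7 α ⟨2, by norm_num⟩ * t 7 α ⟨3, by norm_num⟩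 * t 7 α ⟨2, by norm_num⟩ * t 7 α ⟨3, by norm_num⟩ * t 7 α ⟨4, by norm_num⟩ * t 7 α ⟨3, by norm_num⟩)⁻¹) = (t 7 α ⟨1, by norm_num⟩ * t 7 α ⟨2, by norm_num⟩ * t 7 α ⟨3, by norm_num⟩ * t 7 α ⟨2, by norm_num⟩ * t 7 α ⟨3, by norm_num⟩ * t 7 α ⟨4, by norm_num⟩ * t 7 α ⟨3, by norm_num⟩) * ((t 7 α ⟨0, by norm_num⟩ * t 7 α ⟨2, by norm_num⟩) * (t 7 α ⟨0, by norm_num⟩ * t 7 α ⟨2, by norm_num⟩)) * (t 7 α ⟨1, by norm_num⟩ * t 7 α ⟨2, by norm_num⟩ * t 7 α ⟨3, by norm_num⟩ * t 7 α ⟨2, by norm_num⟩ * t 7 α ⟨3, by norm_num⟩ * t 7 α ⟨4, by norm_num⟩ * t 7 α ⟨3, by norm_num⟩)⁻¹ := by group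
      _ = (t 7 α ⟨1, by norm_num⟩ * t 7 α ⟨2, by norm_num⟩ * t 7 α ⟨3, by norm_num⟩ * t 7 α ⟨2, by norm_num⟩ * t 7 α ⟨3, by norm_num⟩ * t 7 α ⟨4, by norm_num⟩ * t 7 α ⟨3, by norm_num⟩) * z 7 α * (t 7 α ⟨1, by norm_num⟩ * t 7 α ⟨2, by norm_num⟩ * t 7 α ⟨3, by norm_num⟩ * t 7 α ⟨2, by norm_num⟩ * t 7 α ⟨3, by norm_num⟩ * t 7 α ⟨4, by norm_num⟩ * t 7 α ⟨3, by norm_num⟩)⁻¹ := by rw [hBB0]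
      _ = z 7 α := conj_z _
  have hBAsq : ((t 7 α ⟨0, by norm_num⟩ * t 7 α ⟨2, by norm_num⟩) * (t 7 α ⟨2, by norm_num⟩ * t 7 α ⟨1, by norm_num⟩ * t 7 α ⟨0, by norm_num⟩ * t 7 α ⟨4, by norm_num⟩)) * ((t 7 α ⟨0, by norm_num⟩ * t 7 α ⟨2, by norm_num⟩) * (t 7 α ⟨2, by norm_num⟩ * t 7 α ⟨1, by norm_num⟩ * t 7 α ⟨0, by norm_num⟩ * t 7 α ⟨4, by norm_num⟩)) = z 7 α := by
    have hpi : π ((t 7 α ⟨0, by norm_num⟩ * t 7 α ⟨2, by norm_num⟩) * (t 7 α ⟨2, by norm_num⟩ * t 7 α ⟨1, by norm_num⟩ * t 7 α ⟨0, by norm_num⟩ * t 7 α ⟨4, by norm_num⟩)) = π ((t 7 α ⟨1, by norm_num⟩ * t 7 α ⟨2, by norm_num⟩ * t 7 α ⟨3, by norm_num⟩ * t 7 α ⟨2, by norm_num⟩ * t 7 α ⟨3, by norm_num⟩ * t 7 α ⟨4, by norm_num⟩ * t 7 α ⟨3, by norm_num⟩) * (t 7 α ⟨0, by norm_num⟩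 * t 7 α ⟨2, by norm_num⟩) * (t 7 α ⟨1, by norm_num⟩ * t 7 α ⟨2, by norm_num⟩ * t 7 α ⟨3, by norm_num⟩ * t 7 α ⟨2, by norm_num⟩ * t 7 α ⟨3, by norm_num⟩ * t 7 α ⟨4, by norm_num⟩ * t 7 α ⟨3, by norm_num⟩)⁻¹) := by
      simp only [map_mul, map_inv, hπt]
      decide
    exact (sq_eq π hπker _ _ hpi).trans hYY
  have hA : π (t 7 α ⟨2, by norm_num⟩ * t 7 α ⟨1, by norm_num⟩ * t 7 α ⟨0, by norm_num⟩ * t 7 α ⟨4, by norm_num⟩) ∈ alternatingGroup (Fin 7) := by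
    rw [Equiv.Perm.mem_alternatingGroup]
    simp only [map_mul, map_inv, hπt]
    decide
  have hB : π (t 7 α ⟨0, by norm_num⟩ * t 7 α ⟨2, by norm_num⟩) ∈ alternatingGroup (Fin 7) := by
    rw [Equiv.Perm.mem_alternatingGroup]
    simp only [map_mul, map_inv, hπt]
    decide
  have hcG := card_G π hπsurj hπker hz
  have hK : Nat.card (alternatingGroup (Fin 7)) = 2520 := by
    have h2 := two_mul_card_alternatingGroup (α := Fin 7)
    rw [Fintype.card_perm, Fintype.card_fin, ← Nat.card_eq_fintype_card] at h2
    have h3 : Nat.factorial 7 = 5040 := rfl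
    rw [h3] at h2
    omega
  have hfac : (5040 : ℕ).factorization 2 = 4 :=
    fact_pow_two _ _ (by norm_num) (by norm_num) (by norm_num)
  have hcard : 4 * 4 =
      2 ^ ((Nat.card ↥(Subgroup.comap π (alternatingGroup (Fin 7)))).factorization 2) := by
    rw [hcG, hK]
    norm_num [hfac]
  exact case_main π hπsurj hπker hz 4 2 (by norm_num) (by norm_num)
    (t 7 α ⟨2, by norm_num⟩ * t 7 α ⟨1, by norm_num⟩ * t 7 α ⟨0, by norm_num⟩ * t 7 α ⟨4, by norm_num⟩) (t 7 α ⟨0, by norm_num⟩ * t 7 α ⟨2, by norm_num⟩) hAm hBB0 hBAsq hA hB hcard P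

end SylowQuatAux

/-- Let `G = 2.A_n = π⁻¹(A_n)`. If `n ∈ {4, 5}` then every Sylow
2-subgroup of `G` is isomorphic to the quaternion group of order 8, and if `n ∈ {6, 7}`
then every Sylow 2-subgroup of `G` is isomorphic to the generalized quaternion group of
order 16. -/
theorem sylow_two_of_two_An_quaternion
    (n : ℕ) (hn : 4 ≤ n) (α : ℕ) (hα : α = 0 ∨ α = 1)
    (π : DoubleCover.Cover n α →* Equiv.Perm (Fin n))
    (hπt : ∀ j : Fin (n - 1), π (DoubleCover.t n α j) =
      Equiv.swap (Fin.castLE (by omega) j) (Fin.castLE (by omega) j.succ))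
    (hπsurj : Function.Surjective π)
    (hπker : π.ker = Subgroup.zpowers (DoubleCover.z n α))
    (hz : orderOf (DoubleCover.z n α) = 2) :
    ((n = 4 ∨ n = 5) →
      ∀ P : Sylow 2 ↥(Subgroup.comap π (alternatingGroup (Fin n))),
        Nonempty (↥(P : Subgroup ↥(Subgroup.comap π (alternatingGroup (Fin n)))) ≃*
          QuaternionGroup 2)) ∧
    ((n = 6 ∨ n = 7) →
      ∀ P : Sylow 2 ↥(Subgroup.comap π (alternatingGroup (Fin n))),
        Nonempty (↥(P : Subgroup ↥(Subgroup.comap π (alternatingGroup (Fin n)))) ≃*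
          QuaternionGroup 4)) := by
  constructor
  · rintro (rfl | rfl) P
    · exact SylowQuatAux.final4 α π hπt hπsurj hπker hz P
    · exact SylowQuatAux.final5 α π hπt hπsurj hπker hz P
  · rintro (rfl | rfl) P
    · exact SylowQuatAux.final6 α π hπt hπsurj hπker hz P
    · exact SylowQuatAux.final7 α π hπt hπsurj hπker hz P
end

section
/- Let n ∈ {4, 5} and let G = 2^−.S_n (the presented group with α = 1). Then every Sylow 2-subgroup of G is isomorphic to the generalized quaternion group of order 16. -/
/-! ### Auxiliary development -/

section CoxeterBound

private def drep {G : Type*} [Monoid G] (s : ℕ → G) (m k : ℕ) : G :=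
  ((List.range k).map (fun i => s (m - i))).prod

private lemma drep_zero {G : Type*} [Monoid G] (s : ℕ → G) (m : ℕ) : drep s m 0 = 1 := rfl

private lemma drep_succ {G : Type*} [Monoid G] (s : ℕ → G) (m k : ℕ) :
    drep s m (k+1) = drep s m k * s (m - k) := by
  simp [drep, List.range_succ]

private theorem coxeter_bound {G : Type*} [Group G] (M : ℕ) (s : ℕ → G)
    (hsq : ∀ i, i < M → s i * s i = 1)
    (hbr : ∀ i, i + 2 ≤ M → s i * s (i+1) * s i = s (i+1) * s i * s (i+1))
    (hfar : ∀ i j, i + 1 < j → j < M → s i * s j = s j * s i) :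
    ∃ S : Finset G, (S : Set G) = (Subgroup.closure (s '' Set.Iio M) : Set G)
      ∧ S.card ≤ (M+1).factorial := by
  classical
  induction M with
  | zero =>
      refine ⟨{1}, ?_, by simp⟩
      simp [Set.Iio, Nat.not_lt_zero]
  | succ m ih =>
      obtain ⟨S, hS, hcard⟩ := ih
        (fun i hi => hsq i (by omega))
        (fun i hi => hbr i (by omega))
        (fun i j h1 h2 => hfar i j h1 (by omega))
      -- commuting lemma
      have L2 : ∀ k j, j + k < m → drep s m k * s j = s j * drep s m k := by
        intro k
        induction k with
        | zero => intro j _; simp [drep_zero]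
        | succ k ihk =>
            intro j hj
            rw [drep_succ, mul_assoc, ← hfar j (m - k) (by omega) (by omega),
              ← mul_assoc, ihk j (by omega), mul_assoc]
      -- descent lemma
      have L3 : ∀ k j, k ≤ m + 1 → m + 2 ≤ j + k → j ≤ m →
          drep s m k * s j = s (j-1) * drep s m k := by
        intro k
        induction k with
        | zero => intro j _ h2 h3; omega
        | succ k ihk =>
            intro j hk hj2 hj3
            rcases Nat.lt_or_ge (m + 1) (j + k) with hgt | hle
            · rw [drep_succ, mul_assoc, hfar (m - k) j (by omega) (by omega),
                ← mul_assoc, ihk j (by omega) (by omega) hj3, mul_assoc]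
            · -- j + k = m + 1 : braid case; k = k' + 1
              have hjk : j + k = m + 1 := by omega
              obtain ⟨k', rfl⟩ : ∃ k', k = k' + 1 := ⟨k - 1, by omega⟩
              have hmk : m - k' = j := by omega
              have hmk2 : m - (k' + 1) = j - 1 := by omega
              rw [drep_succ, drep_succ, hmk, hmk2]
              have hb := hbr (j-1) (by omega)
              rw [show j - 1 + 1 = j from by omega] at hb
              calc drep s m k' * s j * s (j-1) * s j
                  = drep s m k' * (s j * s (j-1) * s j) := by
                    simp [mul_assoc]
                _ = drep s m k' * (s (j-1) * s j * s (j-1)) := by rw [← hb]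
                _ = (drep s m k' * s (j-1)) * s j * s (j-1) := by
                    simp [mul_assoc]
                _ = (s (j-1) * drep s m k') * s j * s (j-1) := by
                    rw [L2 k' (j-1) (by omega)]
                _ = s (j-1) * (drep s m k' * s j * s (j-1)) := by
                    simp [mul_assoc]
      -- absorption
      have absorb : ∀ x ∈ S, ∀ k ≤ m + 1, ∀ j ≤ m,
          ∃ x' ∈ S, ∃ k' ≤ m + 1, x * drep s m k * s j = x' * drep s m k' := by
        intro x hx k hk j hj
        have hxc : x ∈ Subgroup.closure (s '' Set.Iio m) := by
          rw [← SetLike.mem_coe, ← hS]; exact hx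
        have hmem : ∀ v, v < m → x * s v ∈ S := by
          intro v hv
          have h2 : x * s v ∈ Subgroup.closure (s '' Set.Iio m) :=
            mul_mem hxc (Subgroup.subset_closure ⟨v, hv, rfl⟩)
          rw [← SetLike.mem_coe, ← hS] at h2; exact h2
        rcases Nat.lt_or_ge (j + k) m with h1 | h1
        · exact ⟨x * s j, hmem j (by omega), k, hk, by rw [mul_assoc, L2 k j h1, ← mul_assoc]⟩
        rcases Nat.eq_or_lt_of_le h1 with h2 | h2
        · refine ⟨x, hx, k + 1, by omega, ?_⟩
          rw [drep_succ, show m - k = j from by omega, mul_assoc]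
        rcases Nat.eq_or_lt_of_le h2 with h3 | h3
        · obtain ⟨k', rfl⟩ : ∃ k', k = k' + 1 := ⟨k - 1, by omega⟩
          refine ⟨x, hx, k', by omega, ?_⟩
          rw [drep_succ, show m - k' = j from by omega, mul_assoc, mul_assoc,
            hsq j (by omega), mul_one]
        · refine ⟨x * s (j-1), hmem (j-1) (by omega), k, hk, ?_⟩
          rw [mul_assoc, L3 k j hk (by omega) hj, ← mul_assoc]
      have L1 : ∀ k, k ≤ m + 1 → drep s m k ∈ Subgroup.closure (s '' Set.Iio (m+1)) := by
        intro k
        induction k with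
        | zero => intro _; rw [drep_zero]; exact one_mem _
        | succ k ihk =>
            intro hk
            rw [drep_succ]
            exact mul_mem (ihk (by omega))
              (Subgroup.subset_closure ⟨m - k, by simp [Set.mem_Iio], rfl⟩)
      have hmono : Subgroup.closure (s '' Set.Iio m) ≤ Subgroup.closure (s '' Set.Iio (m+1)) :=
        Subgroup.closure_mono (Set.image_mono (Set.Iio_subset_Iio (by omega)))
      set S' : Finset G := (Finset.range (m+2)).biUnion (fun k => S.image (· * drep s m k))
        with hS'def
      have hmemS' : ∀ a, a ∈ S' ↔ ∃ k ≤ m + 1, ∃ x ∈ S, x * drep s m k = a := by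
        intro a
        simp only [hS'def, Finset.mem_biUnion, Finset.mem_image, Finset.mem_range]
        constructor
        · rintro ⟨k, hk, x, hx, rfl⟩; exact ⟨k, by omega, x, hx, rfl⟩
        · rintro ⟨k, hk, x, hx, rfl⟩; exact ⟨k, by omega, x, hx, rfl⟩
      have h1S' : (1:G) ∈ S' := by
        rw [hmemS']
        refine ⟨0, by omega, 1, ?_, by rw [drep_zero, mul_one]⟩
        rw [← Finset.mem_coe, hS]; exact one_mem _
      -- stabilizer subgroup
      let St : Subgroup G :=
        { carrier := {g | ∀ b ∈ S', b * g ∈ S'}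
          one_mem' := by intro b hb; simpa using hb
          mul_mem' := by
            intro g h hg hh b hb
            rw [← mul_assoc]; exact hh _ (hg _ hb)
          inv_mem' := by
            intro g hg b hb
            have hsurj := Finset.surj_on_of_inj_on_of_card_le (s := S') (t := S')
              (fun a _ => a * g) (fun a ha => hg a ha)
              (fun a₁ a₂ _ _ h => mul_right_cancel h) le_rfl
            obtain ⟨a, ha, hae⟩ := hsurj b hb
            have : b * g⁻¹ = a := by rw [hae, mul_assoc, mul_inv_cancel, mul_one]
            rw [this]; exact ha }
      have hgens : s '' Set.Iio (m+1) ⊆ St := by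
        rintro g ⟨i, hi, rfl⟩
        intro b hb
        rw [hmemS'] at hb
        obtain ⟨k, hk, x, hx, rfl⟩ := hb
        obtain ⟨x', hx', k', hk', heq⟩ := absorb x hx k hk i (by
          simp only [Set.mem_Iio] at hi; omega)
        rw [hmemS', mul_assoc]
        rw [mul_assoc] at heq
        exact ⟨k', hk', x', hx', heq.symm⟩
      refine ⟨S', ?_, ?_⟩
      · apply subset_antisymm
        · intro a ha
          rw [Finset.mem_coe, hmemS'] at ha
          obtain ⟨k, hk, x, hx, rfl⟩ := ha
          have hxc : x ∈ Subgroup.closure (s '' Set.Iio m) := by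
            rw [← SetLike.mem_coe, ← hS]; exact hx
          exact mul_mem (hmono hxc) (L1 k hk)
        · intro a ha
          have hst : a ∈ St := (Subgroup.closure_le St).2 hgens ha
          have := hst 1 h1S'
          rwa [one_mul] at this
      · calc S'.card
            ≤ ∑ k ∈ Finset.range (m+2), (S.image (· * drep s m k)).card :=
              Finset.card_biUnion_le
          _ ≤ ∑ _k ∈ Finset.range (m+2), S.card :=
              Finset.sum_le_sum (fun k _ => Finset.card_image_le)
          _ = (m+2) * S.card := by simp [Finset.sum_const, mul_comm]
          _ ≤ (m+2) * (m+1).factorial := Nat.mul_le_mul_left _ hcard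
          _ = (m+2).factorial := rfl

end CoxeterBound

namespace DoubleCover

variable {n : ℕ}

lemma rel_one {r : FreeGroup (Gen n)} (h : r ∈ rels n 1) :
    PresentedGroup.mk (rels n 1) r = 1 := by
  have : (QuotientGroup.mk r : Cover n 1) = 1 :=
    (QuotientGroup.eq_one_iff r).2 (Subgroup.subset_normalClosure h)
  exact this

lemma mk_zw : PresentedGroup.mk (rels n 1) (zw n) = z n 1 := rfl
lemma mk_tw (j : Fin (n-1)) : PresentedGroup.mk (rels n 1) (tw n j) = t n 1 j := rfl

lemma z_sq : (z n 1) ^ 2 = 1 := by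
  have := rel_one (n := n) (Or.inl rfl)
  simpa [map_pow, mk_zw] using this

lemma t_sq (j : Fin (n-1)) : (t n 1 j) ^ 2 = z n 1 := by
  have := rel_one (n := n) (Or.inr (Or.inl ⟨j, rfl⟩))
  simp only [map_mul, map_pow, map_inv, mk_zw, mk_tw, pow_one] at this
  exact (mul_inv_eq_one).1 this

lemma t_braid {j k : Fin (n-1)} (h : (j:ℕ) + 1 = k) :
    (t n 1 j * t n 1 k) ^ 3 = z n 1 := by
  have := rel_one (n := n) (Or.inr (Or.inr (Or.inl ⟨j, k, h, rfl⟩)))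
  simp only [map_mul, map_pow, map_inv, mk_zw, mk_tw, pow_one] at this
  exact (mul_inv_eq_one).1 this

lemma z_t_comm (j : Fin (n-1)) : z n 1 * t n 1 j = t n 1 j * z n 1 := by
  have := rel_one (n := n) (Or.inr (Or.inr (Or.inr (Or.inl ⟨j, rfl⟩))))
  simp only [map_mul, map_inv, mk_zw, mk_tw] at this
  have h2 := (mul_inv_eq_one).1 this
  exact mul_inv_eq_iff_eq_mul.mp h2

lemma t_swap {j k : Fin (n-1)} (h : 1 < Nat.dist (j:ℕ) (k:ℕ)) :
    t n 1 j * t n 1 k = z n 1 * (t n 1 k * t n 1 j) := by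
  have := rel_one (n := n) (Or.inr (Or.inr (Or.inr (Or.inr ⟨j, k, h, rfl⟩))))
  simp only [map_mul, map_inv, mk_zw, mk_tw] at this
  have h2 := (mul_inv_eq_one).1 this
  rw [h2, mul_assoc]

lemma z_comm (g : Cover n 1) : Commute g (z n 1) := by
  have hgen : g ∈ Subgroup.closure (Set.range (PresentedGroup.of : Gen n → Cover n 1)) := by
    rw [PresentedGroup.closure_range_of]; trivial
  induction hgen using Subgroup.closure_induction with
  | one => exact Commute.one_left _
  | mul a b _ _ ha hb => exact ha.mul_left hb
  | inv a _ ha => exact ha.inv_left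
  | mem a ha =>
      obtain ⟨u, rfl⟩ := ha
      rcases u with _ | j
      · exact Commute.refl _
      · exact (z_t_comm j).symm

def Zc (n : ℕ) : Subgroup (Cover n 1) := Subgroup.zpowers (z n 1)

instance (n : ℕ) : (Zc n).Normal := by
  constructor
  intro a ha g
  obtain ⟨k, rfl⟩ := ha
  have hc : Commute g ((z n 1) ^ k) := (z_comm g).zpow_right k
  rw [show g * (z n 1) ^ k * g⁻¹ = (z n 1)^k by
    rw [hc.eq, mul_assoc, mul_inv_cancel, mul_one]]
  exact Subgroup.zpow_mem _ (Subgroup.mem_zpowers _) k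

abbrev CoverBar (n : ℕ) := Cover n 1 ⧸ Zc n

def sbar (n : ℕ) : ℕ → CoverBar n := fun i =>
  if h : i < n - 1 then (QuotientGroup.mk (t n 1 ⟨i, h⟩) : CoverBar n) else 1

lemma mk_z_eq_one : (QuotientGroup.mk (z n 1) : CoverBar n) = 1 :=
  (QuotientGroup.eq_one_iff _).2 (Subgroup.mem_zpowers _)

lemma sbar_sq {i : ℕ} (h : i < n - 1) : sbar n i * sbar n i = 1 := by
  rw [sbar, dif_pos h, ← QuotientGroup.mk_mul, ← pow_two, t_sq]
  exact mk_z_eq_one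

lemma sbar_braid {i : ℕ} (h : i + 2 ≤ n - 1) :
    sbar n i * sbar n (i+1) * sbar n i = sbar n (i+1) * sbar n i * sbar n (i+1) := by
  have hi : i < n - 1 := by omega
  have hi1 : i + 1 < n - 1 := by omega
  set u := sbar n i with hu0
  set v := sbar n (i+1) with hv0
  have hu : u * u = 1 := sbar_sq hi
  have hv : v * v = 1 := sbar_sq hi1
  have huv : (u * v) ^ 3 = 1 := by
    rw [hu0, hv0, sbar, sbar, dif_pos hi, dif_pos hi1, ← QuotientGroup.mk_mul,
      ← QuotientGroup.mk_pow, t_braid (by simp), mk_z_eq_one]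
  have e1 : u * v * u * (v * u * v) = 1 := by
    rw [show u * v * u * (v * u * v) = (u * v) ^ 3 from by rw [pow_three]; simp [mul_assoc]]
    exact huv
  have hui : u⁻¹ = u := inv_eq_of_mul_eq_one_right hu
  have hvi : v⁻¹ = v := inv_eq_of_mul_eq_one_right hv
  have e2 : u * v * u = (v * u * v)⁻¹ := eq_inv_of_mul_eq_one_left e1
  rw [e2, mul_inv_rev, mul_inv_rev, hui, hvi, mul_assoc]

lemma sbar_far {i j : ℕ} (h1 : i + 1 < j) (h2 : j < n - 1) :
    sbar n i * sbar n j = sbar n j * sbar n i := by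
  have hi : i < n - 1 := by omega
  have hdist : 1 < Nat.dist i j := by
    have hd : Nat.dist i j = i - j + (j - i) := rfl
    omega
  rw [sbar, sbar, dif_pos hi, dif_pos h2, ← QuotientGroup.mk_mul, ← QuotientGroup.mk_mul,
    t_swap (j := ⟨i, hi⟩) (k := ⟨j, h2⟩) hdist, QuotientGroup.mk_mul, mk_z_eq_one, one_mul]

lemma closure_sbar : Subgroup.closure (sbar n '' Set.Iio (n-1)) = ⊤ := by
  rw [eq_top_iff]
  intro g hgt
  clear hgt
  obtain ⟨g0, rfl⟩ := QuotientGroup.mk'_surjective (Zc n) g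
  have hgen : g0 ∈ Subgroup.closure (Set.range (PresentedGroup.of : Gen n → Cover n 1)) := by
    rw [PresentedGroup.closure_range_of]; trivial
  induction hgen using Subgroup.closure_induction with
  | one => rw [map_one]; exact one_mem _
  | mul a b _ _ ha hb => rw [map_mul]; exact mul_mem ha hb
  | inv a _ ha => rw [map_inv]; exact inv_mem ha
  | mem a ha =>
      obtain ⟨u, rfl⟩ := ha
      rcases u with u | j
      · cases u
        have hz1 : QuotientGroup.mk' (Zc n) (z n 1) = 1 := mk_z_eq_one
        rw [show PresentedGroup.of (Sum.inl ()) = z n 1 from rfl, hz1]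
        exact one_mem _
      · refine Subgroup.subset_closure ⟨(j : ℕ), j.isLt, ?_⟩
        rw [sbar, dif_pos j.isLt]
        rfl

lemma card_cover_le (hn : 2 ≤ n) (hz : orderOf (z n 1) = 2) :
    Finite (Cover n 1) ∧ Nat.card (Cover n 1) ≤ 2 * n.factorial := by
  obtain ⟨S, hS, hcard⟩ := coxeter_bound (n-1) (sbar n)
    (fun i hi => sbar_sq hi) (fun i hi => sbar_braid hi) (fun i j h1 h2 => sbar_far h1 h2)
  rw [closure_sbar] at hS
  have hSuniv : ∀ x : CoverBar n, x ∈ S := by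
    intro x; rw [← Finset.mem_coe, hS]; trivial
  haveI hftybar : Finite (CoverBar n) :=
    Set.finite_univ_iff.mp (Set.Finite.subset S.finite_toSet (fun x _ => hSuniv x))
  have hcardbar : Nat.card (CoverBar n) ≤ n.factorial := by
    have h1 : Nat.card (CoverBar n) ≤ S.card := by
      rw [← Set.ncard_univ, ← Set.ncard_coe_finset S]
      exact Set.ncard_le_ncard (fun x _ => hSuniv x) S.finite_toSet
    have h2 : n - 1 + 1 = n := by omega
    rw [h2] at hcard
    exact h1.trans hcard
  have hfinZ : Finite (Zc n) := by
    have : IsOfFinOrder (z n 1) := by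
      rw [← orderOf_pos_iff, hz]; omega
    exact this.finite_zpowers
  have hfin : Finite (Cover n 1) :=
    Finite.of_equiv _ (Subgroup.groupEquivQuotientProdSubgroup (s := Zc n)).symm
  refine ⟨hfin, ?_⟩
  have hprod : Nat.card (Cover n 1)
      = Nat.card (CoverBar n) * Nat.card (Zc n) :=
    Subgroup.card_eq_card_quotient_mul_card_subgroup (Zc n)
  have hZ : Nat.card (Zc n) = 2 := by
    rw [Zc, Nat.card_zpowers, hz]
  rw [hprod, hZ, mul_comm]
  exact Nat.mul_le_mul_left 2 hcardbar

lemma master (hn : 2 ≤ n) (hz : orderOf (z n 1) = 2)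
    {K : Type} [Group K]
    (π : Cover n 1 →* Equiv.Perm (Fin n)) (φ : Cover n 1 →* K)
    (hπz : π (z n 1) = 1) (hφz : φ (z n 1) ≠ 1)
    (hπsur : Function.Surjective π)
    (x y : Cover n 1)
    (hπx4 : (π x) ^ 4 = 1) (hπy2 : (π y) ^ 2 = 1)
    (hπconj : π (y * x * y⁻¹ * x) = 1)
    (hφx4 : (φ x) ^ 4 ≠ 1) (hφy2 : (φ y) ^ 2 ≠ 1)
    (hφconj : φ (y * x * y⁻¹ * x) = 1)
    (hπyx : ∀ k : ℕ, k < 8 → (π y) * (π x) ^ k ≠ 1)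
    (hfact : ((2:ℕ) * n.factorial).factorization 2 = 4)
    (P : Sylow 2 (Cover n 1)) :
    Nonempty (↥(P : Subgroup (Cover n 1)) ≃* QuaternionGroup 4) := by
  obtain ⟨hfin, hcardle⟩ := card_cover_le hn hz
  have hzne : z n 1 ≠ 1 := by
    intro h; rw [h, orderOf_one] at hz; omega
  -- exact cardinality
  have hcardperm : Nat.card (Equiv.Perm (Fin n)) = n.factorial := by
    rw [Nat.card_eq_fintype_card, Fintype.card_perm, Fintype.card_fin]
  have hprod : Nat.card (Cover n 1) = n.factorial * Nat.card π.ker := by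
    rw [Subgroup.card_eq_card_quotient_mul_card_subgroup π.ker]
    congr 1
    rw [Nat.card_congr (QuotientGroup.quotientKerEquivOfSurjective π hπsur).toEquiv]
    exact hcardperm
  have hker2 : 1 < Nat.card π.ker := by
    rw [Subgroup.one_lt_card_iff_ne_bot]
    intro hbot
    have : z n 1 ∈ π.ker := hπz
    rw [hbot, Subgroup.mem_bot] at this
    exact hzne this
  have hkereq : Nat.card π.ker = 2 := by
    have hfactpos : 0 < n.factorial := Nat.factorial_pos n
    have h2 : n.factorial * Nat.card π.ker ≤ n.factorial * 2 := by
      rw [← hprod, mul_comm n.factorial 2]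
      exact hcardle
    have h3 := Nat.le_of_mul_le_mul_left h2 hfactpos
    omega
  have hcard : Nat.card (Cover n 1) = 2 * n.factorial := by
    rw [hprod, hkereq, mul_comm]
  -- ker π = zpowers z
  have hzker : Subgroup.zpowers (z n 1) ≤ π.ker := by
    rw [Subgroup.zpowers_le]; exact hπz
  have hkerz : π.ker = Subgroup.zpowers (z n 1) := by
    symm
    have hfinker : (π.ker : Set (Cover n 1)).Finite := Set.toFinite _
    apply SetLike.coe_injective
    apply Set.eq_of_subset_of_ncard_le hzker
    · have h1 : ((Subgroup.zpowers (z n 1) : Subgroup (Cover n 1)) : Set (Cover n 1)).ncard = 2 := by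
        rw [← Nat.card_coe_set_eq]
        have : Nat.card (Subgroup.zpowers (z n 1)) = 2 := by rw [Nat.card_zpowers, hz]
        exact this
      have h2 : ((π.ker : Subgroup (Cover n 1)) : Set (Cover n 1)).ncard = 2 := by
        rw [← Nat.card_coe_set_eq]
        exact hkereq
      rw [h1, h2]
  have hker_mem : ∀ g : Cover n 1, π g = 1 → g = 1 ∨ g = z n 1 := by
    intro g hg
    have hgz : g ∈ Subgroup.zpowers (z n 1) := by rw [← hkerz]; exact hg
    rw [Subgroup.mem_zpowers_iff] at hgz
    obtain ⟨k, hk⟩ := hgz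
    have hzz : (z n 1) ^ k = (z n 1) ^ (k % 2) := by
      rw [← zpow_mod_orderOf, hz]
      norm_num
    rcases Int.emod_two_eq_zero_or_one k with hm | hm
    · left
      rw [← hk, hzz, hm, zpow_zero]
    · right
      rw [← hk, hzz, hm, zpow_one]
  -- key identities
  have hx4 : x ^ 4 = z n 1 := by
    rcases hker_mem (x ^ 4) (by rw [map_pow, hπx4]) with h | h
    · exact absurd (by rw [← map_pow, h, map_one]) hφx4
    · exact h
  have hy2 : y ^ 2 = z n 1 := by
    rcases hker_mem (y ^ 2) (by rw [map_pow, hπy2]) with h | h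
    · exact absurd (by rw [← map_pow, h, map_one]) hφy2
    · exact h
  have hconj : y * x * y⁻¹ * x = 1 := by
    rcases hker_mem _ hπconj with h | h
    · exact h
    · rw [h] at hφconj; exact absurd hφconj hφz
  have hxy : x * y = y * x⁻¹ := by
    have h1 : y * x * y⁻¹ = x⁻¹ := mul_eq_one_iff_eq_inv.mp hconj
    have h2 : y⁻¹ * x⁻¹ * y = x := by rw [← h1]; group
    have h3 : y⁻¹ * x * y = x⁻¹ := by
      rw [show y⁻¹ * x * y = (y⁻¹ * x⁻¹ * y)⁻¹ from by group, h2]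
    rw [← h3]; group
  have hx8 : x ^ 8 = 1 := by
    rw [show (8:ℕ) = 4 * 2 from rfl, pow_mul, hx4, z_sq]
  have hx4ne : x ^ 4 ≠ 1 := by rw [hx4]; exact hzne
  have hordx : orderOf x = 8 := by
    have := orderOf_eq_prime_pow (x := x) (p := 2) (n := 2)
      (by rw [show (2:ℕ)^2 = 4 from rfl]; exact hx4ne)
      (by rw [show (2:ℕ)^(2+1) = 8 from rfl]; exact hx8)
    simpa using this
  -- the X function
  set X : ZMod 8 → Cover n 1 := fun i => x ^ (i.val) with hX
  have hXadd : ∀ i j : ZMod 8, X (i + j) = X i * X j := by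
    intro i j
    rw [hX, ← pow_add]
    simp only
    rw [pow_eq_pow_iff_modEq, hordx]
    rw [ZMod.val_add]
    exact (Nat.mod_modEq _ 8)
  have hX0 : X 0 = 1 := by rw [hX]; simp
  have hXinv : ∀ i : ZMod 8, X (-i) = (X i)⁻¹ := by
    intro i
    have : X i * X (-i) = 1 := by rw [← hXadd, add_neg_cancel, hX0]
    exact (inv_eq_of_mul_eq_one_right this).symm
  have hyX : ∀ k : ℕ, x ^ k * y = y * (x ^ k)⁻¹ := by
    intro k
    induction k with
    | zero => simp
    | succ k ih =>
        rw [pow_succ', mul_assoc, ih, ← mul_assoc, hxy, mul_assoc, ← mul_inv_rev,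
          ← pow_succ', ← pow_succ]
  have hXy : ∀ i : ZMod 8, X i * y = y * X (-i) := by
    intro i
    rw [hXinv, hX]
    exact hyX i.val
  have hX4 : X 4 = z n 1 := by
    rw [hX]
    show x ^ (4 : ZMod 8).val = z n 1
    rw [show (4 : ZMod 8).val = 4 from rfl, hx4]
  have hy2X : y * y = X 4 := by
    rw [hX4, ← pow_two, hy2]
  -- the homomorphism from Q16
  let f : QuaternionGroup 4 → Cover n 1 := fun q =>
    match q with
    | QuaternionGroup.a i => X i
    | QuaternionGroup.xa i => y * X i
  have hf : ∀ q r : QuaternionGroup 4, f (q * r) = f q * f r := by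
    rintro (i | i) (j | j)
    · show X (i + j) = X i * X j
      exact hXadd i j
    · show y * X (j - i) = X i * (y * X j)
      rw [← mul_assoc, hXy, mul_assoc, ← hXadd]
      congr 1
      ring
    · show y * X (i + j) = (y * X i) * X j
      rw [mul_assoc, hXadd]
    · show X ((4 : ZMod 8) + j - i) = (y * X i) * (y * X j)
      calc X ((4:ZMod 8) + j - i)
          = X 4 * (X (-i) * X j) := by rw [← hXadd, ← hXadd]; congr 1; ring
        _ = (y * y) * (X (-i) * X j) := by rw [hy2X]
        _ = y * (y * X (-i)) * X j := by simp [mul_assoc]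
        _ = y * (X i * y) * X j := by rw [hXy]
        _ = (y * X i) * (y * X j) := by simp [mul_assoc]
  let ψ : QuaternionGroup 4 →* Cover n 1 := MonoidHom.mk' f hf
  have hψinj : Function.Injective ψ := by
    rw [injective_iff_map_eq_one]
    rintro (i | i) h
    · have : x ^ i.val = 1 := h
      have h8 : (8:ℕ) ∣ i.val := by
        rw [← hordx]; exact orderOf_dvd_of_pow_eq_one this
      have : i.val = 0 := by
        have := i.val_lt
        omega
      have : i = 0 := by
        rwa [← ZMod.val_eq_zero]
      rw [this, QuaternionGroup.one_def]
    · exfalso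
      have h1 : y * x ^ i.val = 1 := h
      have h2 : π y * (π x) ^ i.val = 1 := by
        rw [← map_pow, ← map_mul, h1, map_one]
      exact hπyx i.val (by have := i.val_lt; omega) h2
  -- the Sylow subgroup
  have e1 : QuaternionGroup 4 ≃* ψ.range := MonoidHom.ofInjective hψinj
  have hcardQ : Nat.card ψ.range = 2 ^ (Nat.card (Cover n 1)).factorization 2 := by
    rw [hcard, hfact]
    rw [← Nat.card_congr e1.toEquiv]
    rw [Nat.card_eq_fintype_card, QuaternionGroup.card]
    norm_num
  let Q : Sylow 2 (Cover n 1) := Sylow.ofCard ψ.range hcardQ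
  haveI : Finite (Sylow 2 (Cover n 1)) := by
    apply Finite.of_injective (fun (R : Sylow 2 (Cover n 1)) => (R : Subgroup (Cover n 1)))
    intro a b hab
    exact Sylow.ext hab
  have e2 : ↥(P : Subgroup (Cover n 1)) ≃* ↥(Q : Subgroup (Cover n 1)) := Sylow.equiv P Q
  exact ⟨e2.trans e1.symm⟩

/-! ### Concrete data: matrices over `ZMod 17` -/

abbrev M4 := Matrix (Fin 4) (Fin 4) (ZMod 17)

def T0 : M4 := !![0,0,9,0; 0,0,0,9; 15,0,0,0; 0,15,0,0]
def T1 : M4 := !![0,5,3,0; 5,0,0,3; 14,0,0,12; 0,14,12,0]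
def T2 : M4 := !![0,9,0,0; 15,0,0,0; 0,0,0,8; 0,0,2,0]
def T3 : M4 := !![5,3,0,0; 14,12,0,0; 0,0,12,14; 0,0,3,5]
def Tz : M4 := !![16,0,0,0; 0,16,0,0; 0,0,16,0; 0,0,0,16]

instance : DecidableEq (M4ˣ) := fun _ _ => decidable_of_iff _ Units.ext_iff.symm

def U0 : M4ˣ := ⟨T0, -T0, by decide, by decide⟩
def U1 : M4ˣ := ⟨T1, -T1, by decide, by decide⟩
def U2 : M4ˣ := ⟨T2, -T2, by decide, by decide⟩
def U3 : M4ˣ := ⟨T3, -T3, by decide, by decide⟩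
def Uz : M4ˣ := ⟨Tz, Tz, by decide, by decide⟩

/-! ### The case `n = 4` -/

def fperm4 : Gen 4 → Equiv.Perm (Fin 4) :=
  Sum.elim (fun _ => 1) (fun j => Equiv.swap j.castSucc j.succ)

lemma rels4 : ∀ r ∈ rels 4 1, FreeGroup.lift fperm4 r = 1 := by
  intro r hr
  simp only [rels, Set.mem_setOf_eq] at hr
  rcases hr with rfl | ⟨j, rfl⟩ | ⟨j, k, hjk, rfl⟩ | ⟨j, rfl⟩ | ⟨j, k, hjk, rfl⟩ <;>
    simp only [zw, tw, map_mul, map_pow, map_inv, FreeGroup.lift_apply_of]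
  · decide
  · revert j; decide
  · revert j k; decide
  · revert j; decide
  · revert j k; decide

def pi4 : Cover 4 1 →* Equiv.Perm (Fin 4) := PresentedGroup.toGroup rels4

lemma pi4_z : pi4 (z 4 1) = 1 := PresentedGroup.toGroup.of rels4

lemma pi4_t (j : Fin (4-1)) : pi4 (t 4 1 j) = Equiv.swap j.castSucc j.succ :=
  PresentedGroup.toGroup.of rels4

lemma pi4_sur : Function.Surjective pi4 := by
  rw [← MonoidHom.range_eq_top, eq_top_iff]
  intro σ hσt
  clear hσt
  have hσ : σ ∈ Submonoid.closure (Set.range fun i : Fin 3 => Equiv.swap i.castSucc i.succ) := by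
    rw [Equiv.Perm.mclosure_swap_castSucc_succ 3]; trivial
  induction hσ using Submonoid.closure_induction with
  | one => exact one_mem _
  | mul a b _ _ ha hb => exact mul_mem ha hb
  | mem a ha => obtain ⟨i, rfl⟩ := ha; exact ⟨t 4 1 i, pi4_t i⟩

def fmat4 : Gen 4 → M4ˣ := Sum.elim (fun _ => Uz) ![U0, U1, U2]

lemma rels4m : ∀ r ∈ rels 4 1, FreeGroup.lift fmat4 r = 1 := by
  intro r hr
  simp only [rels, Set.mem_setOf_eq] at hr
  rcases hr with rfl | ⟨j, rfl⟩ | ⟨j, k, hjk, rfl⟩ | ⟨j, rfl⟩ | ⟨j, k, hjk, rfl⟩ <;>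
    simp only [zw, tw, map_mul, map_pow, map_inv, FreeGroup.lift_apply_of]
  · decide
  · revert j; decide
  · revert j k; decide
  · revert j; decide
  · revert j k; decide

def phi4 : Cover 4 1 →* M4ˣ := PresentedGroup.toGroup rels4m

lemma phi4_z : phi4 (z 4 1) = Uz := PresentedGroup.toGroup.of rels4m

lemma phi4_t (j : Fin (4-1)) : phi4 (t 4 1 j) = ![U0, U1, U2] j :=
  PresentedGroup.toGroup.of rels4m

/-! ### The case `n = 5` -/

def fperm5 : Gen 5 → Equiv.Perm (Fin 5) :=
  Sum.elim (fun _ => 1) (fun j => Equiv.swap j.castSucc j.succ)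

lemma rels5 : ∀ r ∈ rels 5 1, FreeGroup.lift fperm5 r = 1 := by
  intro r hr
  simp only [rels, Set.mem_setOf_eq] at hr
  rcases hr with rfl | ⟨j, rfl⟩ | ⟨j, k, hjk, rfl⟩ | ⟨j, rfl⟩ | ⟨j, k, hjk, rfl⟩ <;>
    simp only [zw, tw, map_mul, map_pow, map_inv, FreeGroup.lift_apply_of]
  · decide
  · revert j; decide
  · revert j k; decide
  · revert j; decide
  · revert j k; decide

def pi5 : Cover 5 1 →* Equiv.Perm (Fin 5) := PresentedGroup.toGroup rels5

lemma pi5_z : pi5 (z 5 1) = 1 := PresentedGroup.toGroup.of rels5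

lemma pi5_t (j : Fin (5-1)) : pi5 (t 5 1 j) = Equiv.swap j.castSucc j.succ :=
  PresentedGroup.toGroup.of rels5

lemma pi5_sur : Function.Surjective pi5 := by
  rw [← MonoidHom.range_eq_top, eq_top_iff]
  intro σ hσt
  clear hσt
  have hσ : σ ∈ Submonoid.closure (Set.range fun i : Fin 4 => Equiv.swap i.castSucc i.succ) := by
    rw [Equiv.Perm.mclosure_swap_castSucc_succ 4]; trivial
  induction hσ using Submonoid.closure_induction with
  | one => exact one_mem _
  | mul a b _ _ ha hb => exact mul_mem ha hb
  | mem a ha => obtain ⟨i, rfl⟩ := ha; exact ⟨t 5 1 i, pi5_t i⟩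

def fmat5 : Gen 5 → M4ˣ := Sum.elim (fun _ => Uz) ![U0, U1, U2, U3]

lemma rels5m : ∀ r ∈ rels 5 1, FreeGroup.lift fmat5 r = 1 := by
  intro r hr
  simp only [rels, Set.mem_setOf_eq] at hr
  rcases hr with rfl | ⟨j, rfl⟩ | ⟨j, k, hjk, rfl⟩ | ⟨j, rfl⟩ | ⟨j, k, hjk, rfl⟩ <;>
    simp only [zw, tw, map_mul, map_pow, map_inv, FreeGroup.lift_apply_of]
  · decide
  · revert j; decide
  · revert j k; decide
  · revert j; decide
  · revert j k; decide

def phi5 : Cover 5 1 →* M4ˣ := PresentedGroup.toGroup rels5m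

lemma phi5_z : phi5 (z 5 1) = Uz := PresentedGroup.toGroup.of rels5m

lemma phi5_t (j : Fin (5-1)) : phi5 (t 5 1 j) = ![U0, U1, U2, U3] j :=
  PresentedGroup.toGroup.of rels5m

end DoubleCover

/-- For `n ∈ {4, 5}`, every Sylow 2-subgroup of `G = 2^-.S_n` is
isomorphic to the generalized quaternion group of order 16. -/
theorem sylow_two_of_two_minus_S4_S5_is_Q16
    (n : ℕ) (hn : n = 4 ∨ n = 5)
    (hz : orderOf (DoubleCover.z n 1) = 2)
    (P : Sylow 2 (DoubleCover.Cover n 1)) :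
    Nonempty (↥(P : Subgroup (DoubleCover.Cover n 1)) ≃* QuaternionGroup 4) := by
  rcases hn with rfl | rfl
  · refine DoubleCover.master (by norm_num) hz DoubleCover.pi4 DoubleCover.phi4
      DoubleCover.pi4_z (by rw [DoubleCover.phi4_z]; decide) DoubleCover.pi4_sur
      (DoubleCover.t 4 1 ⟨0, by norm_num⟩ * DoubleCover.t 4 1 ⟨1, by norm_num⟩
        * DoubleCover.t 4 1 ⟨2, by norm_num⟩)
      (DoubleCover.t 4 1 ⟨1, by norm_num⟩ * DoubleCover.t 4 1 ⟨0, by norm_num⟩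
        * DoubleCover.t 4 1 ⟨1, by norm_num⟩)
      ?_ ?_ ?_ ?_ ?_ ?_ ?_ ?_ P
    · simp only [map_mul, DoubleCover.pi4_t]; decide
    · simp only [map_mul, DoubleCover.pi4_t]; decide
    · simp only [map_mul, map_inv, DoubleCover.pi4_t]; decide
    · simp only [map_mul, DoubleCover.phi4_t]; decide
    · simp only [map_mul, DoubleCover.phi4_t]; decide
    · simp only [map_mul, map_inv, DoubleCover.phi4_t]; decide
    · simp only [map_mul, DoubleCover.pi4_t]; decide
    · have h : (2:ℕ) * Nat.factorial 4 = 2^4 * 3 := by norm_num [Nat.factorial]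
      rw [h, Nat.factorization_mul (by norm_num) (by norm_num)]
      rw [Nat.Prime.factorization_pow Nat.prime_two]
      simp [Nat.factorization_eq_zero_of_not_dvd (by norm_num : ¬ (2:ℕ) ∣ 3)]
  · refine DoubleCover.master (by norm_num) hz DoubleCover.pi5 DoubleCover.phi5
      DoubleCover.pi5_z (by rw [DoubleCover.phi5_z]; decide) DoubleCover.pi5_sur
      (DoubleCover.t 5 1 ⟨0, by norm_num⟩ * DoubleCover.t 5 1 ⟨1, by norm_num⟩
        * DoubleCover.t 5 1 ⟨2, by norm_num⟩)
      (DoubleCover.t 5 1 ⟨1, by norm_num⟩ * DoubleCover.t 5 1 ⟨0, by norm_num⟩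
        * DoubleCover.t 5 1 ⟨1, by norm_num⟩)
      ?_ ?_ ?_ ?_ ?_ ?_ ?_ ?_ P
    · simp only [map_mul, DoubleCover.pi5_t]; decide
    · simp only [map_mul, DoubleCover.pi5_t]; decide
    · simp only [map_mul, map_inv, DoubleCover.pi5_t]; decide
    · simp only [map_mul, DoubleCover.phi5_t]; decide
    · simp only [map_mul, DoubleCover.phi5_t]; decide
    · simp only [map_mul, map_inv, DoubleCover.phi5_t]; decide
    · simp only [map_mul, DoubleCover.pi5_t]; decide
    · have h : (2:ℕ) * Nat.factorial 5 = 2^4 * 15 := by norm_num [Nat.factorial]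
      rw [h, Nat.factorization_mul (by norm_num) (by norm_num)]
      rw [Nat.Prime.factorization_pow Nat.prime_two]
      simp [Nat.factorization_eq_zero_of_not_dvd (by norm_num : ¬ (2:ℕ) ∣ 15)]
end

section
/- Let n ∈ {6, 7}. If G is a finite perfect group with a cyclic central subgroup Z of order 3 such that G/Z is isomorphic to the alternating group A_n (i.e. G is the triple cover 3.A_n), then every Sylow 2-subgroup of G is isomorphic to the dihedral group of order 8. If G is a finite perfect group with a cyclic central subgroup Z of order 6 such that G/Z ≅ A_n (i.e. G is the six-fold cover 6.A_n), then every Sylow 2-subgroup of G is isomorphic to the generalized quaternion group of order 16. -/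
open Subgroup Equiv Equiv.Perm

namespace Cover18

variable {H : Type*} [Group H]

lemma zpow_eq_of_cast_eq {x : H} {m : ℕ} [NeZero m] (hx : x ^ m = 1) {a b : ℤ}
    (h : (a : ZMod m) = (b : ZMod m)) : x ^ a = x ^ b := by
  have hd : (m : ℤ) ∣ a - b := by
    rwa [← ZMod.intCast_zmod_eq_zero_iff_dvd, Int.cast_sub, sub_eq_zero]
  obtain ⟨t, ht⟩ := hd
  have hab : a = b + m * t := by omega
  rw [hab, zpow_add, zpow_mul, zpow_natCast, hx, one_zpow, mul_one]

lemma conj_key {x y : H} (hc : y * x * y⁻¹ = x⁻¹) (a : ℤ) : y * x ^ a = x ^ (-a) * y := by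
  have h1 : y * x ^ a * y⁻¹ = x ^ (-a) := by
    rw [← conj_zpow, hc, inv_zpow, zpow_neg]
  rw [← h1]; group

lemma conj_key' {x y : H} (hc : y * x * y⁻¹ = x⁻¹) (a : ℤ) : x ^ a * y = y * x ^ (-a) := by
  rw [conj_key hc (-a), neg_neg]

/-- underlying map of the dihedral hom -/
def dihedralHomFun (x y : H) : DihedralGroup 4 → H
  | .r i => x ^ (i.val : ℤ)
  | .sr i => y * x ^ (i.val : ℤ)

def dihedralHom (x y : H) (hx : x ^ 4 = 1) (hy : y ^ 2 = 1) (hc : y * x * y⁻¹ = x⁻¹) :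
    DihedralGroup 4 →* H :=
  MonoidHom.mk' (dihedralHomFun x y) (by
    rintro (i | i) (j | j) <;>
      simp only [DihedralGroup.r_mul_r, DihedralGroup.r_mul_sr, DihedralGroup.sr_mul_r,
        DihedralGroup.sr_mul_sr, dihedralHomFun]
    · rw [← zpow_add]
      exact zpow_eq_of_cast_eq hx (by push_cast [ZMod.natCast_val, ZMod.cast_id]; ring)
    · calc y * x ^ ((j - i).val : ℤ) = y * x ^ ((j.val : ℤ) - (i.val : ℤ)) :=
            congrArg (y * ·) (zpow_eq_of_cast_eq hx
              (by push_cast [ZMod.natCast_val, ZMod.cast_id]; ring))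
        _ = y * (x ^ (-(i.val:ℤ)) * x ^ (j.val:ℤ)) := by rw [← zpow_add]; ring_nf
        _ = (y * x ^ (-(i.val:ℤ))) * x ^ (j.val:ℤ) := by rw [mul_assoc]
        _ = (x ^ ((i.val:ℤ)) * y) * x ^ (j.val:ℤ) := by rw [← conj_key' hc]
        _ = x ^ ((i.val:ℤ)) * (y * x ^ (j.val:ℤ)) := by rw [mul_assoc]
    · calc y * x ^ (((i + j).val : ℤ)) = y * x ^ ((i.val : ℤ) + (j.val : ℤ)) :=
            congrArg (y * ·) (zpow_eq_of_cast_eq hx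
              (by push_cast [ZMod.natCast_val, ZMod.cast_id]; ring))
        _ = y * x ^ ((i.val:ℤ)) * x ^ ((j.val:ℤ)) := by rw [zpow_add, mul_assoc]
    · calc x ^ (((j - i).val : ℤ)) = x ^ ((j.val : ℤ) - (i.val : ℤ)) :=
            zpow_eq_of_cast_eq hx (by push_cast [ZMod.natCast_val, ZMod.cast_id]; ring)
        _ = 1 * (x ^ (-(i.val:ℤ)) * x ^ ((j.val:ℤ))) := by
            rw [← zpow_add, one_mul, sub_eq_neg_add]
        _ = y ^ 2 * (x ^ (-(i.val:ℤ)) * x ^ ((j.val:ℤ))) := by rw [hy]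
        _ = y * (y * x ^ (-(i.val:ℤ))) * x ^ ((j.val:ℤ)) := by rw [sq]; group
        _ = y * (x ^ ((i.val:ℤ)) * y) * x ^ ((j.val:ℤ)) := by rw [← conj_key' hc]
        _ = y * x ^ ((i.val:ℤ)) * (y * x ^ ((j.val:ℤ))) := by group)

lemma dihedralHom_injective {x y : H} (ho : orderOf x = 4) (hx : x ^ 4 = 1) (hy : y ^ 2 = 1)
    (hc : y * x * y⁻¹ = x⁻¹) : Function.Injective (dihedralHom x y hx hy hc) := by
  have hx2 : x ^ 2 ≠ 1 := by
    intro h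
    have := orderOf_dvd_of_pow_eq_one h
    rw [ho] at this; omega
  rw [injective_iff_map_eq_one]
  rintro (i | i) h
  · simp only [dihedralHom, MonoidHom.mk'_apply, dihedralHomFun] at h
    rw [zpow_natCast] at h
    have h4 : orderOf x ∣ i.val := orderOf_dvd_of_pow_eq_one h
    rw [ho] at h4
    have hv : i.val = 0 := by have := i.val_lt; omega
    have : i = 0 := by rwa [← ZMod.val_eq_zero]
    simp [this]
  · exfalso
    simp only [dihedralHom, MonoidHom.mk'_apply, dihedralHomFun] at h
    have hyx : y = (x ^ ((i.val : ℤ)))⁻¹ := eq_inv_of_mul_eq_one_left h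
    apply hx2
    have hinv : x⁻¹ = x := by
      rw [← hc, hyx]; group
    have hxx : x * x = x⁻¹ * x := by rw [hinv]
    rw [sq, hxx, inv_mul_cancel]

/-- underlying map of the quaternion hom -/
def quatHomFun (x y : H) : QuaternionGroup 4 → H
  | .a i => x ^ (i.val : ℤ)
  | .xa i => y * x ^ (i.val : ℤ)

def quatHom (x y : H) (hx : x ^ 8 = 1) (hy : y ^ 2 = x ^ 4) (hc : y * x * y⁻¹ = x⁻¹) :
    QuaternionGroup 4 →* H :=
  MonoidHom.mk' (quatHomFun x y) (by
    have hx' : x ^ (2 * 4) = 1 := by norm_num [hx]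
    rintro (i | i) (j | j) <;>
      simp only [QuaternionGroup.a_mul_a, QuaternionGroup.a_mul_xa, QuaternionGroup.xa_mul_a,
        QuaternionGroup.xa_mul_xa, quatHomFun]
    · rw [← zpow_add]
      exact zpow_eq_of_cast_eq hx' (by push_cast [ZMod.natCast_val, ZMod.cast_id]; ring)
    · calc y * x ^ ((j - i).val : ℤ) = y * x ^ ((j.val : ℤ) - (i.val : ℤ)) :=
            congrArg (y * ·) (zpow_eq_of_cast_eq hx'
              (by push_cast [ZMod.natCast_val, ZMod.cast_id]; ring))
        _ = y * (x ^ (-(i.val:ℤ)) * x ^ (j.val:ℤ)) := by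
            rw [← zpow_add, sub_eq_neg_add]
        _ = (y * x ^ (-(i.val:ℤ))) * x ^ (j.val:ℤ) := by rw [mul_assoc]
        _ = (x ^ ((i.val:ℤ)) * y) * x ^ (j.val:ℤ) := by rw [← conj_key' hc]
        _ = x ^ ((i.val:ℤ)) * (y * x ^ (j.val:ℤ)) := by rw [mul_assoc]
    · calc y * x ^ (((i + j).val : ℤ)) = y * x ^ ((i.val : ℤ) + (j.val : ℤ)) :=
            congrArg (y * ·) (zpow_eq_of_cast_eq hx'
              (by push_cast [ZMod.natCast_val, ZMod.cast_id]; ring))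
        _ = y * x ^ ((i.val:ℤ)) * x ^ ((j.val:ℤ)) := by rw [zpow_add, mul_assoc]
    · calc x ^ ((((4 : ZMod (2*4)) + j - i).val : ℤ))
          = x ^ ((4:ℤ) + ((-(i.val:ℤ)) + (j.val:ℤ))) := by
            refine zpow_eq_of_cast_eq hx' ?_
            push_cast [ZMod.natCast_val, ZMod.cast_id]
            ring
        _ = x ^ (4:ℕ) * (x ^ (-(i.val:ℤ)) * x ^ ((j.val:ℤ))) := by
            rw [zpow_add, zpow_add, ← zpow_natCast x (4:ℕ)]
            norm_num
        _ = y ^ 2 * (x ^ (-(i.val:ℤ)) * x ^ ((j.val:ℤ))) := by rw [hy]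
        _ = y * (y * x ^ (-(i.val:ℤ))) * x ^ ((j.val:ℤ)) := by rw [sq]; group
        _ = y * (x ^ ((i.val:ℤ)) * y) * x ^ ((j.val:ℤ)) := by rw [← conj_key' hc]
        _ = y * x ^ ((i.val:ℤ)) * (y * x ^ ((j.val:ℤ))) := by group)

lemma quatHom_injective {x y : H} (ho : orderOf x = 8) (hx : x ^ 8 = 1) (hy : y ^ 2 = x ^ 4)
    (hc : y * x * y⁻¹ = x⁻¹) : Function.Injective (quatHom x y hx hy hc) := by
  have hx2 : x ^ 2 ≠ 1 := by
    intro h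
    have := orderOf_dvd_of_pow_eq_one h
    rw [ho] at this; omega
  rw [injective_iff_map_eq_one]
  rintro (i | i) h
  · simp only [quatHom, MonoidHom.mk'_apply, quatHomFun] at h
    rw [zpow_natCast] at h
    have h8 : orderOf x ∣ i.val := orderOf_dvd_of_pow_eq_one h
    rw [ho] at h8
    have hv : i.val = 0 := by have := i.val_lt; omega
    have : i = 0 := by rwa [← ZMod.val_eq_zero]
    simp [this]
  · exfalso
    simp only [quatHom, MonoidHom.mk'_apply, quatHomFun] at h
    have hyx : y = (x ^ ((i.val : ℤ)))⁻¹ := eq_inv_of_mul_eq_one_left h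
    apply hx2
    have hinv : x⁻¹ = x := by
      rw [← hc, hyx]; group
    have hxx : x * x = x⁻¹ * x := by rw [hinv]
    rw [sq, hxx, inv_mul_cancel]

lemma cycleType_of_involution {α : Type*} [Fintype α] [DecidableEq α]
    (h7 : Fintype.card α ≤ 7) {p : Perm α} (hs : sign p = 1)
    (hp2 : p ^ 2 = 1) (hp1 : p ≠ 1) : p.cycleType = Multiset.replicate 2 2 := by
  have hdvd : orderOf p ∣ 2 := orderOf_dvd_of_pow_eq_one hp2
  have hall : ∀ c ∈ p.cycleType, c = 2 := by
    intro c hc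
    have h1 : c ∣ 2 := (dvd_of_mem_cycleType hc).trans hdvd
    have h2 : 2 ≤ c := two_le_of_mem_cycleType hc
    have := Nat.le_of_dvd (by norm_num) h1
    omega
  set k := Multiset.card p.cycleType with hk
  have hrep : p.cycleType = Multiset.replicate k 2 :=
    Multiset.eq_replicate.2 ⟨rfl, hall⟩
  have hsum : p.cycleType.sum = 2 * k := by
    rw [hrep, Multiset.sum_replicate, smul_eq_mul, mul_comm]
  have hksmall : 2 * k ≤ 7 := by
    have h1 : p.cycleType.sum = p.support.card := sum_cycleType p
    have h2 : p.support.card ≤ Fintype.card α := Finset.card_le_univ _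
    omega
  have hk0 : k ≠ 0 := by
    intro h
    apply hp1
    rw [← cycleType_eq_zero, hrep, h, Multiset.replicate_zero]
  have hkeven : Even (3 * k) := by
    rcases Nat.even_or_odd (3 * k) with he | ho
    · exact he
    · exfalso
      have := sign_of_cycleType p
      rw [hsum, hk] at this
      have h3 : (2 * k + k) = 3 * k := by ring
      rw [h3] at this
      rw [Odd.neg_one_pow ho] at this
      rw [hs] at this
      exact (by decide : ¬ ((1 : ℤˣ) = -1)) this
  have : k = 2 := by
    rcases Nat.even_or_odd k with ⟨t, ht⟩ | hodd
    · omega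
    · exfalso
      have : Odd (3 * k) := by
        rcases hodd with ⟨t, ht⟩
        exact ⟨3 * t + 1, by omega⟩
      exact (Nat.not_even_iff_odd.2 this) hkeven
  rw [hrep, this]

lemma isConj_involutions {α : Type*} [Fintype α] [DecidableEq α]
    (h6 : 6 ≤ Fintype.card α) (h7 : Fintype.card α ≤ 7)
    {σ τ : alternatingGroup α} (hσ2 : σ ^ 2 = 1) (hσ1 : σ ≠ 1)
    (hτ2 : τ ^ 2 = 1) (hτ1 : τ ≠ 1) : IsConj σ τ := by
  have hσs : sign (σ : Perm α) = 1 := mem_alternatingGroup.1 σ.2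
  have hτs : sign (τ : Perm α) = 1 := mem_alternatingGroup.1 τ.2
  have hc1 : (σ : Perm α) ^ 2 = 1 := by
    rw [← Subgroup.coe_pow, hσ2]; rfl
  have hc2 : (τ : Perm α) ^ 2 = 1 := by
    rw [← Subgroup.coe_pow, hτ2]; rfl
  have hn1 : (σ : Perm α) ≠ 1 := fun h => hσ1 (Subtype.ext h)
  have hn2 : (τ : Perm α) ≠ 1 := fun h => hτ1 (Subtype.ext h)
  have hct1 := cycleType_of_involution h7 hσs hc1 hn1
  have hct2 := cycleType_of_involution h7 hτs hc2 hn2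
  have hconj : IsConj (σ : Perm α) (τ : Perm α) :=
    isConj_iff_cycleType_eq.2 (hct1.trans hct2.symm)
  refine alternatingGroup.isConj_of hconj ?_
  have : (σ : Perm α).support.card = 4 := by
    rw [← sum_cycleType, hct1]; decide
  omega

lemma fact2 {k m N : ℕ} (hm : ¬ 2 ∣ m) (hm0 : m ≠ 0) (hN : N = 2 ^ k * m) :
    N.factorization 2 = k := by
  subst hN
  rw [Nat.factorization_mul (pow_ne_zero _ two_ne_zero) hm0]
  rw [Nat.Prime.factorization_pow Nat.prime_two]
  rw [Finsupp.add_apply, Finsupp.single_eq_same, Nat.factorization_eq_zero_of_not_dvd hm]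
  omega

lemma subgroup_eq_of_le_of_card {G : Type*} [Group G] [Finite G] {S T : Subgroup G}
    (h : S ≤ T) (hcard : Nat.card T ≤ Nat.card S) : S = T := by
  have e : Nat.card (S.subgroupOf T) = Nat.card S :=
    Nat.card_congr (Subgroup.subgroupOfEquivOfLe h).toEquiv
  have : S.subgroupOf T = ⊤ := by
    apply Subgroup.eq_top_of_card_eq
    have := Subgroup.card_le_of_le h
    omega
  have hT : T ≤ S := Subgroup.subgroupOf_eq_top.1 this
  exact le_antisymm h hT

lemma card_alt (n : ℕ) [NeZero n] [Nontrivial (Fin n)] :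
    2 * Nat.card (alternatingGroup (Fin n)) = n.factorial := by
  rw [Nat.card_eq_fintype_card, two_mul_card_alternatingGroup, Fintype.card_perm,
    Fintype.card_fin]

lemma card_alt6 : Nat.card (alternatingGroup (Fin 6)) = 360 := by
  haveI : Nontrivial (Fin 6) := ⟨0, 1, by decide⟩
  have h := card_alt 6
  rw [show Nat.factorial 6 = 720 from rfl] at h
  omega

lemma card_alt7 : Nat.card (alternatingGroup (Fin 7)) = 2520 := by
  haveI : Nontrivial (Fin 7) := ⟨0, 1, by decide⟩
  have h := card_alt 7
  rw [show Nat.factorial 7 = 5040 from rfl] at h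
  omega

lemma card_altn {n : ℕ} (hn : n = 6 ∨ n = 7) :
    Nat.card (alternatingGroup (Fin n)) = 360 ∨ Nat.card (alternatingGroup (Fin n)) = 2520 := by
  rcases hn with rfl | rfl
  · exact Or.inl card_alt6
  · exact Or.inr card_alt7

/-- any subgroup of order 8 of `A_n`, `n = 6, 7`, is dihedral of order 8 -/
lemma altSubgroupCard8 {n : ℕ} (hn : n = 6 ∨ n = 7)
    (S : Subgroup (alternatingGroup (Fin n))) (hS : Nat.card S = 8) :
    Nonempty (↥S ≃* DihedralGroup 4) := by
  classical
  have hfact : (Nat.card (alternatingGroup (Fin n))).factorization 2 = 3 := by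
    rcases hn with rfl | rfl
    · exact fact2 (m := 45) (by norm_num) (by norm_num) (by rw [card_alt6]; norm_num)
    · exact fact2 (m := 315) (by norm_num) (by norm_num) (by rw [card_alt7]; norm_num)
  -- explicit dihedral subgroup
  have hD : ∃ D : Subgroup (alternatingGroup (Fin n)),
      Nat.card D = 8 ∧ Nonempty (↥D ≃* DihedralGroup 4) := by
    have key : ∃ x y : alternatingGroup (Fin n),
        orderOf x = 4 ∧ x ^ 4 = 1 ∧ y ^ 2 = 1 ∧ y * x * y⁻¹ = x⁻¹ := by
      rcases hn with rfl | rfl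
      · refine ⟨⟨c[0, 1, 2, 3] * c[4, 5], by rw [mem_alternatingGroup]; decide⟩,
          ⟨c[0, 2] * c[4, 5], by rw [mem_alternatingGroup]; decide⟩, ?_, ?_, ?_, ?_⟩
        · rw [Subgroup.orderOf_mk]
          exact orderOf_eq_prime_pow (p := 2) (n := 1) (by decide) (by decide)
        · exact Subtype.ext (by decide)
        · exact Subtype.ext (by decide)
        · exact Subtype.ext (by decide)
      · refine ⟨⟨c[0, 1, 2, 3] * c[4, 5], by rw [mem_alternatingGroup]; decide⟩,
          ⟨c[0, 2] * c[4, 5], by rw [mem_alternatingGroup]; decide⟩, ?_, ?_, ?_, ?_⟩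
        · rw [Subgroup.orderOf_mk]
          exact orderOf_eq_prime_pow (p := 2) (n := 1) (by decide) (by decide)
        · exact Subtype.ext (by decide)
        · exact Subtype.ext (by decide)
        · exact Subtype.ext (by decide)
    obtain ⟨x, y, ho, hx, hy, hc⟩ := key
    have hinj := dihedralHom_injective ho hx hy hc
    refine ⟨(dihedralHom x y hx hy hc).range, ?_, ⟨((MonoidHom.ofInjective hinj).symm)⟩⟩
    rw [← Nat.card_congr (MonoidHom.ofInjective hinj).toEquiv, Nat.card_eq_fintype_card,
      DihedralGroup.card]
  obtain ⟨D, hDcard, ⟨eD⟩⟩ := hD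
  -- both are Sylow 2-subgroups
  obtain ⟨R, hSR⟩ := (IsPGroup.of_card (hS.trans (by norm_num : (8:ℕ) = 2 ^ 3))).exists_le_sylow
  obtain ⟨R', hDR'⟩ :=
    (IsPGroup.of_card (hDcard.trans (by norm_num : (8:ℕ) = 2 ^ 3))).exists_le_sylow
  have hRcard : Nat.card R = 8 := by
    rw [R.card_eq_multiplicity, hfact]; norm_num
  have hR'card : Nat.card R' = 8 := by
    rw [R'.card_eq_multiplicity, hfact]; norm_num
  have hSeq : S = (R : Subgroup _) := subgroup_eq_of_le_of_card hSR (by omega)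
  have hDeq : D = (R' : Subgroup _) := subgroup_eq_of_le_of_card hDR' (by omega)
  exact ⟨((MulEquiv.subgroupCongr hSeq).trans
    ((Sylow.equiv R R').trans (MulEquiv.subgroupCongr hDeq.symm))).trans eD⟩

lemma altIsoSubgroupCard8 {n : ℕ} (hn : n = 6 ∨ n = 7) {H : Type*} [Group H]
    (e : H ≃* alternatingGroup (Fin n)) (S : Subgroup H) (hS : Nat.card S = 8) :
    Nonempty (↥S ≃* DihedralGroup 4) := by
  have iso1 : ↥S ≃* ↥(S.map (e : H →* alternatingGroup (Fin n))) := e.subgroupMap S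
  have hcard : Nat.card (S.map (e : H →* alternatingGroup (Fin n))) = 8 := by
    rw [← Nat.card_congr iso1.toEquiv]; exact hS
  obtain ⟨iso2⟩ := altSubgroupCard8 hn _ hcard
  exact ⟨iso1.trans iso2⟩

lemma part1 {n : ℕ} (hn : n = 6 ∨ n = 7) (G : Type) [Group G] [Finite G] (Z : Subgroup G)
    (hZn : Z.Normal) (hZc : Z ≤ Subgroup.center G) (hZ3 : Nat.card Z = 3)
    (e : (G ⧸ Z) ≃* alternatingGroup (Fin n)) (P : Sylow 2 G) :
    Nonempty (↥(P : Subgroup G) ≃* DihedralGroup 4) := by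
  classical
  set π : G →* G ⧸ Z := QuotientGroup.mk' Z with hπ
  set φ : ↥(P : Subgroup G) →* G ⧸ Z := π.comp (P : Subgroup G).subtype with hφ
  obtain ⟨k, hk⟩ := IsPGroup.iff_card.mp P.isPGroup'
  have hφinj : Function.Injective φ := by
    rw [injective_iff_map_eq_one]
    intro x hx
    have hxZ : (x : G) ∈ Z := (QuotientGroup.eq_one_iff _).1 hx
    have h1 : orderOf (x : G) ∣ 3 := by
      rw [← hZ3, ← Subgroup.orderOf_mk (x : G) hxZ]
      exact orderOf_dvd_natCard _
    have h2 : orderOf (x : G) ∣ 2 ^ k := by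
      rw [Subgroup.orderOf_coe, ← hk]
      exact orderOf_dvd_natCard _
    have hco : Nat.Coprime (2 ^ k) 3 := Nat.Coprime.pow_left k (by norm_num)
    have : orderOf (x : G) ∣ 1 := hco ▸ Nat.dvd_gcd h2 h1
    have hx1 : (x : G) = 1 := by
      rw [← orderOf_eq_one_iff]
      exact Nat.dvd_one.1 this
    exact Subtype.ext hx1
  have hrange : φ.range = (P : Subgroup G).map π := by
    rw [hφ, MonoidHom.range_comp, Subgroup.range_subtype]
  have iso1 : ↥(P : Subgroup G) ≃* ↥((P : Subgroup G).map π) :=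
    (MonoidHom.ofInjective hφinj).trans (MulEquiv.subgroupCongr hrange)
  have hGcard : Nat.card G = Nat.card (G ⧸ Z) * Nat.card Z :=
    Subgroup.card_eq_card_quotient_mul_card_subgroup Z
  have hq : Nat.card (G ⧸ Z) = Nat.card (alternatingGroup (Fin n)) := Nat.card_congr e.toEquiv
  have hcardP : Nat.card ↥(P : Subgroup G) = 8 := by
    rw [P.card_eq_multiplicity]
    rcases card_altn hn with hA | hA
    · rw [fact2 (k := 3) (m := 135) (by norm_num) (by norm_num)
        (by rw [hGcard, hq, hA, hZ3]; norm_num)]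
      norm_num
    · rw [fact2 (k := 3) (m := 945) (by norm_num) (by norm_num)
        (by rw [hGcard, hq, hA, hZ3]; norm_num)]
      norm_num
  have hcardS : Nat.card ((P : Subgroup G).map π) = 8 := by
    rw [← Nat.card_congr iso1.toEquiv]; exact hcardP
  obtain ⟨iso2⟩ := altIsoSubgroupCard8 hn e _ hcardS
  exact ⟨iso1.trans iso2⟩


lemma part2 {n : ℕ} (hn : n = 6 ∨ n = 7) (G : Type) [Group G] [Finite G] (Z : Subgroup G)
    (hZn : Z.Normal) (hperf : commutator G = ⊤) (hZc : Z ≤ Subgroup.center G)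
    (hZcyc : IsCyclic ↥Z) (hZ6 : Nat.card ↥Z = 6)
    (e : (G ⧸ Z) ≃* alternatingGroup (Fin n)) (P : Sylow 2 G) :
    Nonempty (↥(P : Subgroup G) ≃* QuaternionGroup 4) := by
  classical
  set π : G →* G ⧸ Z := QuotientGroup.mk' Z with hπdef
  have hGcard : Nat.card G = Nat.card (G ⧸ Z) * Nat.card ↥Z :=
    Subgroup.card_eq_card_quotient_mul_card_subgroup Z
  have hq : Nat.card (G ⧸ Z) = Nat.card (alternatingGroup (Fin n)) := Nat.card_congr e.toEquiv
  have hG : Nat.card G = 2160 ∨ Nat.card G = 15120 := by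
    rcases card_altn hn with hA | hA
    · left; rw [hGcard, hq, hA, hZ6]
    · right; rw [hGcard, hq, hA, hZ6]
  have hcardP : Nat.card ↥(P : Subgroup G) = 16 := by
    rw [P.card_eq_multiplicity]
    rcases hG with h | h
    · rw [fact2 (k := 4) (m := 135) (by norm_num) (by norm_num) (by rw [h]; norm_num)]
      norm_num
    · rw [fact2 (k := 4) (m := 945) (by norm_num) (by norm_num) (by rw [h]; norm_num)]
      norm_num
  have hidx : (P : Subgroup G).index = 135 ∨ (P : Subgroup G).index = 945 := by
    have hmi := Subgroup.card_mul_index (P : Subgroup G)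
    rw [hcardP] at hmi
    rcases hG with h | h
    · left; rw [h] at hmi; omega
    · right; rw [h] at hmi; omega
  -- the central involution z
  obtain ⟨g0, hg0⟩ := hZcyc.exists_generator
  have hg0ord : orderOf g0 = 6 := by
    have htop : Subgroup.zpowers g0 = ⊤ := by
      rw [Subgroup.eq_top_iff']; exact hg0
    have hcz := Nat.card_zpowers g0
    rw [htop, Subgroup.card_top, hZ6] at hcz
    omega
  have hg0six : g0 ^ 6 = 1 := by rw [← hg0ord]; exact pow_orderOf_eq_one g0
  set zc : ↥Z := g0 ^ 3 with hzc
  have hzcord : orderOf zc = 2 := by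
    rw [hzc, orderOf_pow, hg0ord]
    decide
  set z : G := (zc : G) with hz
  have hzZ : z ∈ Z := zc.2
  have hzord : orderOf z = 2 := by rw [hz, Subgroup.orderOf_coe, hzcord]
  have hz2 : z ^ 2 = 1 := by rw [← hzord]; exact pow_orderOf_eq_one z
  have hz1 : z ≠ 1 := by
    intro h
    have h2 := hzord
    rw [h, orderOf_one] at h2
    omega
  have hzcent : z ∈ Subgroup.center G := hZc hzZ
  have hZsq : ∀ w : ↥Z, w ^ 2 = 1 → w = 1 ∨ w = zc := by
    intro w hw
    have hwmem : w ∈ Submonoid.powers g0 := mem_powers_iff_mem_zpowers.2 (hg0 w)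
    obtain ⟨m, hm⟩ := (Submonoid.mem_powers_iff w g0).1 hwmem
    have h2m : g0 ^ (2 * m) = 1 := by rw [mul_comm, pow_mul, hm, hw]
    have hdvd : (6 : ℕ) ∣ 2 * m := hg0ord ▸ orderOf_dvd_of_pow_eq_one h2m
    obtain ⟨t, ht⟩ : ∃ t, m = 3 * t := ⟨m / 3, by omega⟩
    rcases Nat.even_or_odd t with ⟨u, hu⟩ | ⟨u, hu⟩
    · left
      rw [← hm, ht, hu, show 3 * (u + u) = 6 * u by ring, pow_mul, hg0six, one_pow]
    · right
      rw [← hm, ht, hu, show 3 * (2 * u + 1) = 6 * u + 3 by ring, pow_add, pow_mul, hg0six,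
        one_pow, one_mul, hzc]
  -- z lies in P
  have hzP : z ∈ (P : Subgroup G) := by
    have hpz : IsPGroup 2 (Subgroup.zpowers z) :=
      IsPGroup.of_card (n := 1) (by rw [Nat.card_zpowers, hzord, pow_one])
    obtain ⟨Q, hQ⟩ := hpz.exists_le_sylow
    obtain ⟨g, hg⟩ := MulAction.exists_smul_eq G Q P
    have hzQ : z ∈ (Q : Subgroup G) := hQ (Subgroup.mem_zpowers z)
    have hmem : z ∈ ((g • Q : Sylow 2 G) : Subgroup G) := by
      rw [Sylow.coe_subgroup_smul, Subgroup.mem_smul_pointwise_iff_exists]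
      refine ⟨z, hzQ, ?_⟩
      show MulAut.conj g z = z
      simp only [MulAut.conj_apply]
      rw [Subgroup.mem_center_iff.1 hzcent g, mul_assoc, mul_inv_cancel, mul_one]
    rwa [hg] at hmem
  -- elements of P lying in Z
  have hPZ : ∀ w : G, w ∈ (P : Subgroup G) → w ∈ Z → w = 1 ∨ w = z := by
    intro w hwP hwZ
    have h1 : orderOf w ∣ 16 := by
      rw [← hcardP, ← Subgroup.orderOf_mk w hwP]
      exact orderOf_dvd_natCard _
    have h2 : orderOf w ∣ 6 := by
      rw [← hZ6, ← Subgroup.orderOf_mk w hwZ]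
      exact orderOf_dvd_natCard _
    have h3 : orderOf w ∣ 2 := by
      have := Nat.dvd_gcd h1 h2
      norm_num at this
      exact this
    have hw2 : w ^ 2 = 1 := orderOf_dvd_iff_pow_eq_one.1 h3
    have hww : (⟨w, hwZ⟩ : ↥Z) ^ 2 = 1 := Subtype.ext (by simpa using hw2)
    rcases hZsq _ hww with h | h
    · left; exact congrArg Subtype.val h
    · right; exact congrArg Subtype.val h
  -- image of P in the quotient
  set S : Subgroup (G ⧸ Z) := (P : Subgroup G).map π with hSdef
  set φ : ↥(P : Subgroup G) →* G ⧸ Z := π.comp (P : Subgroup G).subtype with hφdef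
  have hφrange : φ.range = S := by
    rw [hφdef, MonoidHom.range_comp, Subgroup.range_subtype, hSdef]
  have hπp : ∀ x : G, π x = 1 ↔ x ∈ Z := fun x => QuotientGroup.eq_one_iff x
  set z' : ↥(P : Subgroup G) := ⟨z, hzP⟩ with hz'def
  have hker : φ.ker = Subgroup.zpowers z' := by
    ext x
    constructor
    · intro hx
      have hxZ : (x : G) ∈ Z := (hπp _).1 hx
      rcases hPZ _ x.2 hxZ with h | h
      · have hh : x = 1 := Subtype.ext h
        rw [hh]; exact Subgroup.one_mem _
      · have hh : x = z' := Subtype.ext h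
        rw [hh]; exact Subgroup.mem_zpowers _
    · intro hx
      obtain ⟨k, hk⟩ := hx
      have hmem : ((z' ^ k : ↥(P : Subgroup G)) : G) ∈ Z := by
        rw [Subgroup.coe_zpow]
        exact Subgroup.zpow_mem Z hzZ k
      rw [← hk]
      exact (hπp _).2 hmem
  have hkercard : Nat.card φ.ker = 2 := by
    rw [hker, Nat.card_zpowers, Subgroup.orderOf_mk, hzord]
  have hcardS : Nat.card S = 8 := by
    have h1 : Nat.card (↥(P : Subgroup G) ⧸ φ.ker) = Nat.card φ.range :=
      Nat.card_congr (QuotientGroup.quotientKerEquivRange φ).toEquiv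
    have h2 := Subgroup.card_eq_card_quotient_mul_card_subgroup φ.ker
    rw [hcardP, h1, hkercard, hφrange] at h2
    omega
  -- dihedral structure on S
  obtain ⟨ψ⟩ := altIsoSubgroupCard8 hn e S hcardS
  set rb : ↥S := ψ.symm (.r 1) with hrbdef
  set sb : ↥S := ψ.symm (.sr 0) with hsbdef
  have hrb4 : rb ^ 4 = 1 := by
    rw [hrbdef, ← map_pow, ← map_one ψ.symm]
    exact congrArg ψ.symm (by decide)
  have hrb2 : rb ^ 2 ≠ 1 := by
    rw [hrbdef, ← map_pow, ← map_one ψ.symm]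
    intro h
    exact (by decide : ¬ ((DihedralGroup.r 1 : DihedralGroup 4) ^ 2 = 1)) (ψ.symm.injective h)
  have hsb2 : sb ^ 2 = 1 := by
    rw [hsbdef, ← map_pow, ← map_one ψ.symm]
    exact congrArg ψ.symm (by decide)
  have hsb1 : sb ≠ 1 := by
    rw [hsbdef, ← map_one ψ.symm]
    intro h
    exact (by decide : ¬ ((DihedralGroup.sr 0 : DihedralGroup 4) = 1)) (ψ.symm.injective h)
  have hsrb2 : (sb * rb) ^ 2 = 1 := by
    rw [hsbdef, hrbdef, ← map_mul, ← map_pow, ← map_one ψ.symm]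
    exact congrArg ψ.symm (by decide)
  have hsrb1 : sb * rb ≠ 1 := by
    rw [hsbdef, hrbdef, ← map_mul, ← map_one ψ.symm]
    intro h
    exact (by decide : ¬ ((DihedralGroup.sr 0 * DihedralGroup.r 1 : DihedralGroup 4) = 1))
      (ψ.symm.injective h)
  -- coe versions in G ⧸ Z
  have hrb4' : ((rb : G ⧸ Z)) ^ 4 = 1 := by
    rw [← Subgroup.coe_pow, hrb4]; rfl
  have hrb2' : ((rb : G ⧸ Z)) ^ 2 ≠ 1 := by
    rw [← Subgroup.coe_pow]
    intro h
    exact hrb2 (Subtype.ext h)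
  have hsb2' : ((sb : G ⧸ Z)) ^ 2 = 1 := by
    rw [← Subgroup.coe_pow, hsb2]; rfl
  have hsb1' : ((sb : G ⧸ Z)) ≠ 1 := fun h => hsb1 (Subtype.ext h)
  have hsrb2' : ((sb : G ⧸ Z) * (rb : G ⧸ Z)) ^ 2 = 1 := by
    rw [← Subgroup.coe_mul, ← Subgroup.coe_pow, hsrb2]; rfl
  have hsrb1' : (sb : G ⧸ Z) * (rb : G ⧸ Z) ≠ 1 := by
    rw [← Subgroup.coe_mul]
    intro h
    exact hsrb1 (Subtype.ext h)
  -- lifts of rb and sb in P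
  obtain ⟨r, hrP, hrπ⟩ := Subgroup.mem_map.1 rb.2
  obtain ⟨s, hsP, hsπ⟩ := Subgroup.mem_map.1 sb.2
  -- conjugacy of involutions in the quotient
  have hcard67 : 6 ≤ Fintype.card (Fin n) ∧ Fintype.card (Fin n) ≤ 7 := by
    rcases hn with rfl | rfl <;> simp
  have hconj : ∀ u v : G ⧸ Z, u ^ 2 = 1 → u ≠ 1 → v ^ 2 = 1 → v ≠ 1 →
      ∃ w : G ⧸ Z, w * u * w⁻¹ = v := by
    intro u v hu2 hu1 hv2 hv1
    have hc : IsConj (e u) (e v) := by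
      apply isConj_involutions hcard67.1 hcard67.2
      · rw [← map_pow, hu2, map_one]
      · intro h
        apply hu1
        have h2 := congrArg e.symm h
        rwa [MulEquiv.symm_apply_apply, map_one] at h2
      · rw [← map_pow, hv2, map_one]
      · intro h
        apply hv1
        have h2 := congrArg e.symm h
        rwa [MulEquiv.symm_apply_apply, map_one] at h2
    obtain ⟨c, hcc⟩ := isConj_iff.1 hc
    refine ⟨e.symm c, ?_⟩
    have h2 := congrArg e.symm hcc
    rwa [map_mul, map_mul, map_inv, MulEquiv.symm_apply_apply, MulEquiv.symm_apply_apply] at h2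
  -- the key claim: no involutions outside {1, z} in P
  have hinv : ∀ t : G, t ∈ (P : Subgroup G) → t ^ 2 = 1 → t = 1 ∨ t = z := by
    by_contra hcon
    push_neg at hcon
    obtain ⟨t, htP, ht2, ht1, htz⟩ := hcon
    have htb2 : (π t) ^ 2 = 1 := by rw [← map_pow, ht2, map_one]
    have htb1 : π t ≠ 1 := by
      intro h
      have htZ : t ∈ Z := (hπp t).1 h
      rcases hPZ t htP htZ with h' | h'
      · exact ht1 h'
      · exact htz h'
    -- every element of P over an involution of the quotient is an involution
    have hlift : ∀ v : G ⧸ Z, v ^ 2 = 1 → v ≠ 1 → ∀ p : G, p ∈ (P : Subgroup G) →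
        π p = v → p ^ 2 = 1 := by
      intro v hv2 hv1 p hpP hpv
      obtain ⟨w, hw⟩ := hconj (π t) v htb2 htb1 hv2 hv1
      obtain ⟨w0, hw0⟩ := QuotientGroup.mk'_surjective Z w
      set u : G := w0 * t * w0⁻¹ with hudef
      have hu2 : u ^ 2 = 1 := by
        rw [hudef, conj_pow, ht2, mul_one, mul_inv_cancel]
      have hπu : π u = v := by
        rw [hudef, map_mul, map_mul, map_inv, hw0, hw]
      have hpu : π (p * u⁻¹) = 1 := by
        rw [map_mul, map_inv, hpv, hπu, mul_inv_cancel]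
      have hcZ : p * u⁻¹ ∈ Z := (hπp _).1 hpu
      set c : G := p * u⁻¹ with hcdef
      have hccent : c ∈ Subgroup.center G := hZc hcZ
      have hp : p = c * u := by rw [hcdef]; group
      have hcu : u * c = c * u := Subgroup.mem_center_iff.1 hccent u
      have hp2 : p ^ 2 = c ^ 2 := by
        calc p ^ 2 = c * u * (c * u) := by rw [hp, sq]
          _ = c * (u * c) * u := by group
          _ = c * (c * u) * u := by rw [hcu]
          _ = (c * c) * (u * u) := by group
          _ = c ^ 2 * u ^ 2 := by rw [← sq, ← sq]
          _ = c ^ 2 := by rw [hu2, mul_one]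
      have hc6 : c ^ 6 = 1 := by
        have hdv : orderOf (⟨c, hcZ⟩ : ↥Z) ∣ 6 := by
          rw [← hZ6]; exact orderOf_dvd_natCard _
        rw [Subgroup.orderOf_mk] at hdv
        exact orderOf_dvd_iff_pow_eq_one.1 hdv
      have hp6 : p ^ 6 = 1 := by
        rw [show (6 : ℕ) = 2 * 3 from rfl, pow_mul, hp2, ← pow_mul,
          show 2 * 3 = 6 from rfl, hc6]
      have hd6 : orderOf p ∣ 6 := orderOf_dvd_of_pow_eq_one hp6
      have hd16 : orderOf p ∣ 16 := by
        rw [← hcardP, ← Subgroup.orderOf_mk p hpP]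
        exact orderOf_dvd_natCard _
      have hd2 : orderOf p ∣ 2 := by
        have := Nat.dvd_gcd hd16 hd6
        norm_num at this
        exact this
      exact orderOf_dvd_iff_pow_eq_one.1 hd2
    -- build a dihedral complement inside P
    have hr4 : r ^ 4 = 1 := by
      have h1 : (r ^ 2) ^ 2 = 1 := by
        apply hlift ((rb : G ⧸ Z) ^ 2) (by rw [← pow_mul]; exact hrb4') hrb2'
          (r ^ 2) (pow_mem hrP 2)
        rw [map_pow, hrπ]
      rw [← pow_mul] at h1
      exact h1
    have hs2 : s ^ 2 = 1 := hlift (sb : G ⧸ Z) hsb2' hsb1' s hsP hsπ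
    have hsr2 : (s * r) ^ 2 = 1 := by
      apply hlift ((sb : G ⧸ Z) * (rb : G ⧸ Z)) hsrb2' hsrb1' (s * r) (mul_mem hsP hrP)
      rw [map_mul, hrπ, hsπ]
    have hsinv : s⁻¹ = s := by
      apply inv_eq_of_mul_eq_one_left
      rw [← sq, hs2]
    have hconj_sr : s * r * s⁻¹ = r⁻¹ := by
      have h1 : s * r * s * r = 1 := by
        rw [show s * r * s * r = (s * r) * (s * r) by group, ← sq, hsr2]
      have h2 : s * r * s = r⁻¹ := by
        rw [← mul_one (s * r * s), ← mul_inv_cancel r, ← mul_assoc, h1, one_mul]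
      rw [hsinv]
      exact h2
    have hπr2 : (π r) ^ 2 ≠ 1 := by rw [hrπ]; exact hrb2'
    have hπr4 : (π r) ^ 4 = 1 := by rw [hrπ]; exact hrb4'
    have hπs2 : (π s) ^ 2 = 1 := by rw [hsπ]; exact hsb2'
    have hπc : (π s) * (π r) * (π s)⁻¹ = (π r)⁻¹ := by
      rw [← map_mul, ← map_inv, ← map_mul, hconj_sr, map_inv]
    have ho4 : orderOf (π r) = 4 :=
      orderOf_eq_prime_pow (p := 2) (n := 1) (by exact hπr2) (by exact hπr4)
    set f : DihedralGroup 4 →* G := dihedralHom r s hr4 hs2 hconj_sr with hfdef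
    set fq : DihedralGroup 4 →* G ⧸ Z := dihedralHom (π r) (π s) hπr4 hπs2 hπc with hfqdef
    have hcomp : ∀ d, π (f d) = fq d := by
      rintro (i | i) <;>
        simp only [hfdef, hfqdef, dihedralHom, MonoidHom.mk'_apply, dihedralHomFun,
          map_zpow, map_mul]
    have hfqinj : Function.Injective fq := dihedralHom_injective ho4 hπr4 hπs2 hπc
    have hfinj : Function.Injective f := by
      intro a b hab
      exact hfqinj (by rw [← hcomp a, ← hcomp b, hab])
    set Qd : Subgroup G := f.range with hQddef
    have hQdP : Qd ≤ (P : Subgroup G) := by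
      rintro w ⟨d, rfl⟩
      cases d with
      | r i =>
        simp only [hfdef, dihedralHom, MonoidHom.mk'_apply, dihedralHomFun]
        exact Subgroup.zpow_mem _ hrP _
      | sr i =>
        simp only [hfdef, dihedralHom, MonoidHom.mk'_apply, dihedralHomFun]
        exact mul_mem hsP (Subgroup.zpow_mem _ hrP _)
    have hzQd : z ∉ Qd := by
      rintro ⟨d, hd⟩
      have h1 : fq d = 1 := by
        rw [← hcomp d, hd]
        exact (hπp z).2 hzZ
      have h2 : d = 1 := by
        apply hfqinj
        rw [h1, map_one]
      rw [h2, map_one] at hd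
      exact hz1 hd.symm
    have hQdcard : Nat.card Qd = 8 := by
      rw [← Nat.card_congr (MonoidHom.ofInjective hfinj).toEquiv, Nat.card_eq_fintype_card,
        DihedralGroup.card]
    set Q' : Subgroup ↥(P : Subgroup G) := Qd.subgroupOf (P : Subgroup G) with hQ'def
    have hQ'card : Nat.card Q' = 8 := by
      rw [hQ'def, Nat.card_congr (Subgroup.subgroupOfEquivOfLe hQdP).toEquiv, hQdcard]
    have hQ'idx : Q'.index = 2 := by
      have hmi := Subgroup.card_mul_index Q'
      rw [hQ'card, hcardP] at hmi
      omega
    haveI hQ'norm : Q'.Normal := by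
      constructor
      intro a ha g
      rw [Subgroup.mul_mem_iff_of_index_two hQ'idx,
        Subgroup.mul_mem_iff_of_index_two hQ'idx]
      simp only [ha, iff_true, Subgroup.inv_mem_iff]
    have hCcard : Nat.card (↥(P : Subgroup G) ⧸ Q') = 2 := by
      rw [← Subgroup.index_eq_card, hQ'idx]
    haveI : Fact (Nat.Prime 2) := ⟨Nat.prime_two⟩
    have hCcyc : IsCyclic (↥(P : Subgroup G) ⧸ Q') := isCyclic_of_prime_card hCcard
    letI : CommGroup (↥(P : Subgroup G) ⧸ Q') := IsCyclic.commGroup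
    haveI : (P : Subgroup G).FiniteIndex := by
      constructor
      rcases hidx with h | h <;> rw [h] <;> norm_num
    set φq : ↥(P : Subgroup G) →* (↥(P : Subgroup G) ⧸ Q') := QuotientGroup.mk' Q' with hφqdef
    have hkey : ∀ (k : ℕ) (g₀ : G), g₀⁻¹ * z ^ k * g₀ ∈ (P : Subgroup G) →
        g₀⁻¹ * z ^ k * g₀ = z ^ k := by
      intro k g₀ _
      have hzk : z ^ k ∈ Subgroup.center G := Subgroup.pow_mem _ hzcent k
      rw [(Subgroup.mem_center_iff.1 hzk g₀⁻¹), mul_assoc, inv_mul_cancel, mul_one]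
    have hVz := MonoidHom.transfer_eq_pow φq z hkey
    have hzidx : z ^ (P : Subgroup G).index = z := by
      rcases hidx with h | h <;> rw [h]
      · rw [show (135 : ℕ) = 2 * 67 + 1 from rfl, pow_add, pow_mul, hz2, one_pow, one_mul,
          pow_one]
      · rw [show (945 : ℕ) = 2 * 472 + 1 from rfl, pow_add, pow_mul, hz2, one_pow, one_mul,
          pow_one]
    have hVz' : MonoidHom.transfer φq z = φq z' := by
      rw [hVz]
      exact congrArg φq (Subtype.ext hzidx)
    have hne : φq z' ≠ 1 := by
      intro h
      have : z' ∈ Q' := (QuotientGroup.eq_one_iff z').1 h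
      rw [hQ'def, Subgroup.mem_subgroupOf] at this
      exact hzQd this
    have hVone : MonoidHom.transfer φq z = 1 := by
      have hle := Abelianization.commutator_subset_ker (MonoidHom.transfer φq)
      rw [hperf] at hle
      exact hle (Subgroup.mem_top z)
    rw [hVone] at hVz'
    exact hne hVz'.symm
  -- now construct the quaternion structure on P
  have hπr4 : (π r) ^ 4 = 1 := by rw [hrπ]; exact hrb4'
  have hπr2 : (π r) ^ 2 ≠ 1 := by rw [hrπ]; exact hrb2'
  have hr4Z : r ^ 4 ∈ Z := by
    apply (hπp _).1
    rw [map_pow, hπr4]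
  have hr4z : r ^ 4 = z := by
    rcases hPZ _ (pow_mem hrP 4) hr4Z with h | h
    · exfalso
      have h22 : (r ^ 2) ^ 2 = 1 := by rw [← pow_mul]; exact h
      rcases hinv (r ^ 2) (pow_mem hrP 2) h22 with h' | h'
      · apply hπr2
        rw [← map_pow, h', map_one]
      · apply hπr2
        rw [← map_pow, h', (hπp z).2 hzZ]
    · exact h
  have hs2Z : s ^ 2 ∈ Z := by
    apply (hπp _).1
    rw [map_pow, hsπ]
    exact hsb2'
  have hs2z : s ^ 2 = z := by
    rcases hPZ _ (pow_mem hsP 2) hs2Z with h | h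
    · exfalso
      rcases hinv s hsP h with h' | h'
      · apply hsb1'
        rw [← hsπ, h', map_one]
      · apply hsb1'
        rw [← hsπ, h', (hπp z).2 hzZ]
    · exact h
  -- quotient-side relation
  have hsbc : sb * rb * sb⁻¹ * rb = 1 := by
    have hsbinv : sb⁻¹ = sb := by
      apply inv_eq_of_mul_eq_one_left
      rw [← sq, hsb2]
    have h1 : sb * rb * sb * rb = 1 := by
      rw [show sb * rb * sb * rb = (sb * rb) * (sb * rb) by group, ← sq, hsrb2]
    rw [hsbinv]
    exact h1
  have hcmem : s * r * s⁻¹ * r ∈ Z := by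
    apply (hπp _).1
    have : π (s * r * s⁻¹ * r) = (sb : G ⧸ Z) * rb * (sb : G ⧸ Z)⁻¹ * rb := by
      rw [map_mul, map_mul, map_mul, map_inv, hrπ, hsπ]
    rw [this, ← Subgroup.coe_mul, ← Subgroup.coe_inv, ← Subgroup.coe_mul, ← Subgroup.coe_mul,
      hsbc]
    rfl
  have hcP : s * r * s⁻¹ * r ∈ (P : Subgroup G) :=
    mul_mem (mul_mem (mul_mem hsP hrP) (inv_mem hsP)) hrP
  have hconj_sr : s * r * s⁻¹ = r⁻¹ := by
    rcases hPZ _ hcP hcmem with h | h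
    · rw [← mul_one (s * r * s⁻¹), ← mul_inv_cancel r, ← mul_assoc, h, one_mul]
    · exfalso
      have hzc2 : s * r * s⁻¹ = z * r⁻¹ := by
        rw [← mul_one (s * r * s⁻¹), ← mul_inv_cancel r, ← mul_assoc, h]
      have hsr2 : (s * r) ^ 2 = 1 := by
        have hcalc : (s * r) ^ 2 = (s * r * s⁻¹) * (s ^ 2) * r := by
          rw [sq, sq]; group
        rw [hcalc, hzc2, hs2z]
        have hzr : r⁻¹ * z = z * r⁻¹ := Subgroup.mem_center_iff.1 hzcent r⁻¹
        calc z * r⁻¹ * z * r = z * (r⁻¹ * z) * r := by group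
          _ = z * (z * r⁻¹) * r := by rw [hzr]
          _ = (z * z) * (r⁻¹ * r) := by group
          _ = z ^ 2 * (r⁻¹ * r) := by rw [← sq]
          _ = 1 := by rw [hz2, inv_mul_cancel, one_mul]
      rcases hinv (s * r) (mul_mem hsP hrP) hsr2 with h' | h'
      · apply hsrb1'
        rw [← hrπ, ← hsπ, ← map_mul, h', map_one]
      · apply hsrb1'
        rw [← hrπ, ← hsπ, ← map_mul, h', (hπp z).2 hzZ]
  have hr8 : r ^ 8 = 1 := by
    rw [show (8 : ℕ) = 4 * 2 from rfl, pow_mul, hr4z, hz2]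
  have hro8 : orderOf r = 8 := by
    have h4 : ¬ r ^ 2 ^ 2 = 1 := by
      rw [show (2 : ℕ) ^ 2 = 4 from rfl, hr4z]
      exact hz1
    exact orderOf_eq_prime_pow (p := 2) (n := 2) h4 (by rw [show (2:ℕ) ^ 3 = 8 from rfl, hr8])
  have hs2r4 : s ^ 2 = r ^ 4 := by rw [hs2z, hr4z]
  set h : QuaternionGroup 4 →* G := quatHom r s hr8 hs2r4 hconj_sr with hhdef
  have hinjh : Function.Injective h := quatHom_injective hro8 hr8 hs2r4 hconj_sr
  have hmemh : ∀ q, h q ∈ (P : Subgroup G) := by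
    intro q
    cases q with
    | a i =>
      simp only [hhdef, quatHom, MonoidHom.mk'_apply, quatHomFun]
      exact Subgroup.zpow_mem _ hrP _
    | xa i =>
      simp only [hhdef, quatHom, MonoidHom.mk'_apply, quatHomFun]
      exact mul_mem hsP (Subgroup.zpow_mem _ hrP _)
  set h' : QuaternionGroup 4 →* ↥(P : Subgroup G) := h.codRestrict (P : Subgroup G) hmemh
    with hh'def
  have hinjh' : Function.Injective h' := by
    intro a b hab
    exact hinjh (congrArg Subtype.val hab)
  have hbij : Function.Bijective h' := by
    rw [Nat.bijective_iff_injective_and_card]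
    refine ⟨hinjh', ?_⟩
    rw [hcardP, Nat.card_eq_fintype_card, QuaternionGroup.card]
  exact ⟨(MulEquiv.ofBijective h' hbij).symm⟩

end Cover18


/-- Let `n ∈ {6, 7}`. If `G` is a finite perfect group with a cyclic
central subgroup `Z` of order 3 such that `G/Z ≅ A_n` (i.e. `G` is the triple cover
`3.A_n`), then every Sylow 2-subgroup of `G` is isomorphic to the dihedral group of
order 8. If instead `Z` is cyclic central of order 6 (i.e. `G` is the six-fold cover
`6.A_n`), then every Sylow 2-subgroup of `G` is isomorphic to the generalized quaternion
group of order 16. -/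
theorem sylow_two_of_exceptional_covers (n : ℕ) (hn : n = 6 ∨ n = 7) :
    (∀ (G : Type) (_ : Group G) (_ : Finite G) (Z : Subgroup G) (_ : Z.Normal),
      commutator G = ⊤ → Z ≤ Subgroup.center G → IsCyclic Z → Nat.card Z = 3 →
      Nonempty ((G ⧸ Z) ≃* alternatingGroup (Fin n)) →
      ∀ P : Sylow 2 G, Nonempty (↥(P : Subgroup G) ≃* DihedralGroup 4)) ∧
    (∀ (G : Type) (_ : Group G) (_ : Finite G) (Z : Subgroup G) (_ : Z.Normal),
      commutator G = ⊤ → Z ≤ Subgroup.center G → IsCyclic Z → Nat.card Z = 6 →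
      Nonempty ((G ⧸ Z) ≃* alternatingGroup (Fin n)) →
      ∀ P : Sylow 2 G, Nonempty (↥(P : Subgroup G) ≃* QuaternionGroup 4)) := by
  constructor
  · intro G _ _ Z hZn hperf hZc hZcyc hZ3 hiso P
    obtain ⟨e⟩ := hiso
    exact Cover18.part1 hn G Z hZn hZc hZ3 e P
  · intro G _ _ Z hZn hperf hZc hZcyc hZ6 hiso P
    obtain ⟨e⟩ := hiso
    exact Cover18.part2 hn G Z hZn hperf hZc hZcyc hZ6 e P
end

section
/- Let n ∈ {6, 7} and d ∈ {3, 6}, and let G = d.A_n be the d-fold cover of the alternating group A_n. Then every Sylow 3-subgroup P of G is extraspecial of order 27 and exponent 3; that is, |P| = 27, P is nonabelian, and every element of P has order dividing 3. -/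
open Equiv Equiv.Perm Subgroup

private lemma fact27 (m : ℕ) (hm : ¬ 3 ∣ m) (h0 : m ≠ 0) :
    (Nat.factorization (27 * m)) 3 = 3 := by
  have h27 : (27:ℕ) = 3^3 := by norm_num
  rw [Nat.factorization_mul (by norm_num) h0, h27,
    Nat.Prime.factorization_pow (by norm_num)]
  have hz : m.factorization 3 = 0 := Nat.factorization_eq_zero_of_not_dvd hm
  simp [hz]

private lemma cycle_parts_three {α : Type*} [Fintype α] [DecidableEq α]
    (hcard : Fintype.card α ≤ 8) {σ : Equiv.Perm α} (h : σ ^ 27 = 1) :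
    ∀ c ∈ σ.cycleType, c = 3 := by
  intro c hc
  have h1 : c ∣ 27 := (Equiv.Perm.dvd_of_mem_cycleType hc).trans (orderOf_dvd_of_pow_eq_one h)
  have h2 : 2 ≤ c := Equiv.Perm.two_le_of_mem_cycleType hc
  have h3 : c ≤ 8 := by
    have hle : c ≤ σ.cycleType.sum :=
      Multiset.single_le_sum (fun x _ => Nat.zero_le x) c hc
    rw [Equiv.Perm.sum_cycleType] at hle
    have : σ.support.card ≤ Fintype.card α := by
      simpa using Finset.card_le_univ σ.support
    omega
  interval_cases c <;> omega

private lemma pow27_to_pow3 {α : Type*} [Fintype α] [DecidableEq α]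
    (hcard : Fintype.card α ≤ 8) {σ : Equiv.Perm α} (h : σ ^ 27 = 1) :
    σ ^ 3 = 1 := by
  have hparts := cycle_parts_three hcard h
  have hdvd : orderOf σ ∣ 3 := by
    rw [← Equiv.Perm.lcm_cycleType]
    exact Multiset.lcm_dvd.mpr fun c hc => by rw [hparts c hc]
  exact orderOf_dvd_iff_pow_eq_one.mp hdvd

private lemma real_of_conj {α : Type*} [Fintype α] [DecidableEq α]
    (ρ τ σ : Equiv.Perm α) (hs : Equiv.Perm.sign τ = 1) (hc : τ * ρ * τ⁻¹ = ρ⁻¹)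
    (hconj : ρ.cycleType = σ.cycleType) :
    ∃ τ' : Equiv.Perm α, Equiv.Perm.sign τ' = 1 ∧ τ' * σ * τ'⁻¹ = σ⁻¹ := by
  obtain ⟨c, hcρ⟩ := isConj_iff.mp (Equiv.Perm.isConj_iff_cycleType_eq.mpr hconj)
  refine ⟨c * τ * c⁻¹, ?_, ?_⟩
  · rw [map_mul, map_mul, map_inv, hs, mul_one]
    exact mul_inv_cancel _
  · rw [← hcρ]
    calc (c*τ*c⁻¹) * (c*ρ*c⁻¹) * (c*τ*c⁻¹)⁻¹
        = c * (τ*ρ*τ⁻¹) * c⁻¹ := by group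
      _ = c * ρ⁻¹ * c⁻¹ := by rw [hc]
      _ = (c*ρ*c⁻¹)⁻¹ := by group

private lemma real_core {α : Type*} [Fintype α] [DecidableEq α]
    (hcard : Fintype.card α ≤ 7)
    (ρ₁ ρ₂ τ₁ τ₂ : Equiv.Perm α)
    (hρ₁ : ρ₁.cycleType = {3}) (hρ₂ : ρ₂.cycleType = {3, 3})
    (hs₁ : Equiv.Perm.sign τ₁ = 1) (hc₁ : τ₁ * ρ₁ * τ₁⁻¹ = ρ₁⁻¹)
    (hs₂ : Equiv.Perm.sign τ₂ = 1) (hc₂ : τ₂ * ρ₂ * τ₂⁻¹ = ρ₂⁻¹)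
    (σ : Equiv.Perm α) (h : σ ^ 3 = 1) :
    ∃ τ : Equiv.Perm α, Equiv.Perm.sign τ = 1 ∧ τ * σ * τ⁻¹ = σ⁻¹ := by
  have h27 : σ ^ 27 = 1 := by
    rw [show (27:ℕ) = 3*9 from rfl, pow_mul, h, one_pow]
  have hparts := cycle_parts_three (hcard.trans (by norm_num)) h27
  have hrep : σ.cycleType = Multiset.replicate (Multiset.card σ.cycleType) 3 :=
    Multiset.eq_replicate_card.mpr hparts
  have hsum : 3 * Multiset.card σ.cycleType ≤ 7 := by
    have h1 : σ.cycleType.sum = σ.support.card := σ.sum_cycleType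
    have h2 : σ.cycleType.sum = 3 * Multiset.card σ.cycleType := by
      rw [hrep]
      simp [Multiset.sum_replicate, mul_comm]
    have h3 : σ.support.card ≤ Fintype.card α := by
      simpa using Finset.card_le_univ σ.support
    omega
  set k := Multiset.card σ.cycleType with hk
  have hk2 : k ≤ 2 := by omega
  interval_cases k
  · have hone : σ = 1 := Equiv.Perm.cycleType_eq_zero.mp (by rw [hrep]; rfl)
    exact ⟨1, by simp [hone]⟩
  · exact real_of_conj ρ₁ τ₁ σ hs₁ hc₁ (by rw [hρ₁, hrep]; rfl)
  · exact real_of_conj ρ₂ τ₂ σ hs₂ hc₂ (by rw [hρ₂, hrep]; rfl)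

private lemma cycleType_triple {α : Type*} [Fintype α] [DecidableEq α] (a b c : α)
    (h1 : a ≠ b) (h2 : a ≠ c) (h3 : b ≠ c) :
    (List.formPerm [a, b, c]).cycleType = {3} := by
  have hnd : List.Nodup [a,b,c] := by simp [h1,h2,h3]
  have hcyc : (List.formPerm [a,b,c]).IsCycle :=
    List.isCycle_formPerm hnd (by simp)
  rw [hcyc.cycleType, List.support_formPerm_of_nodup _ hnd (by intro x; simp)]
  have : ([a,b,c].toFinset).card = 3 := by
    rw [List.card_toFinset, List.Nodup.dedup hnd]
    rfl
  rw [this]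

private lemma real6 (σ : Equiv.Perm (Fin 6)) (h : σ ^ 3 = 1) :
    ∃ τ : Equiv.Perm (Fin 6), Equiv.Perm.sign τ = 1 ∧ τ * σ * τ⁻¹ = σ⁻¹ := by
  have hρ₁ : (List.formPerm [0,1,2] : Equiv.Perm (Fin 6)).cycleType = {3} :=
    cycleType_triple _ _ _ (by decide) (by decide) (by decide)
  have hρ₃ : (List.formPerm [3,4,5] : Equiv.Perm (Fin 6)).cycleType = {3} :=
    cycleType_triple _ _ _ (by decide) (by decide) (by decide)
  have hd : Equiv.Perm.Disjoint (List.formPerm [0,1,2] : Equiv.Perm (Fin 6))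
      (List.formPerm [3,4,5]) :=
    (List.formPerm_disjoint_iff (by decide) (by decide) (by decide) (by decide)).mpr (by rw [List.disjoint_iff_ne]; decide)
  have hρ₂ : ((List.formPerm [0,1,2] : Equiv.Perm (Fin 6)) *
      List.formPerm [3,4,5]).cycleType = {3,3} := by
    rw [Equiv.Perm.Disjoint.cycleType_mul hd, hρ₁, hρ₃]
    rfl
  exact real_core (by decide) _ _ (Equiv.swap 1 2 * Equiv.swap 3 4)
    (Equiv.swap 1 2 * Equiv.swap 4 5) hρ₁ hρ₂
    (by decide) (by decide) (by decide) (by decide) σ h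

private lemma real7 (σ : Equiv.Perm (Fin 7)) (h : σ ^ 3 = 1) :
    ∃ τ : Equiv.Perm (Fin 7), Equiv.Perm.sign τ = 1 ∧ τ * σ * τ⁻¹ = σ⁻¹ := by
  have hρ₁ : (List.formPerm [0,1,2] : Equiv.Perm (Fin 7)).cycleType = {3} :=
    cycleType_triple _ _ _ (by decide) (by decide) (by decide)
  have hρ₃ : (List.formPerm [3,4,5] : Equiv.Perm (Fin 7)).cycleType = {3} :=
    cycleType_triple _ _ _ (by decide) (by decide) (by decide)
  have hd : Equiv.Perm.Disjoint (List.formPerm [0,1,2] : Equiv.Perm (Fin 7))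
      (List.formPerm [3,4,5]) :=
    (List.formPerm_disjoint_iff (by decide) (by decide) (by decide) (by decide)).mpr (by rw [List.disjoint_iff_ne]; decide)
  have hρ₂ : ((List.formPerm [0,1,2] : Equiv.Perm (Fin 7)) *
      List.formPerm [3,4,5]).cycleType = {3,3} := by
    rw [Equiv.Perm.Disjoint.cycleType_mul hd, hρ₁, hρ₃]
    rfl
  exact real_core (by decide) _ _ (Equiv.swap 1 2 * Equiv.swap 3 4)
    (Equiv.swap 1 2 * Equiv.swap 4 5) hρ₁ hρ₂
    (by decide) (by decide) (by decide) (by decide) σ h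

/-- Let `n ∈ {6, 7}`, `d ∈ {3, 6}`, and let `G = d.A_n` be the `d`-fold
cover of `A_n`, i.e. a finite perfect group with a cyclic central subgroup `Z` of order `d`
such that `G/Z ≅ A_n`. Then every Sylow 3-subgroup `P` of `G` is extraspecial of order 27
and exponent 3: `|P| = 27`, `P` is nonabelian, and every element of `P` cubes to the
identity. -/
theorem sylow_three_of_exceptional_covers_extraspecial
    (n d : ℕ) (hn : n = 6 ∨ n = 7) (hd : d = 3 ∨ d = 6)
    (G : Type) [Group G] [Finite G] (Z : Subgroup G) [Z.Normal]
    (hperf : commutator G = ⊤) (hZc : Z ≤ Subgroup.center G) (hZcyc : IsCyclic Z)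
    (hZcard : Nat.card Z = d)
    (hquot : Nonempty ((G ⧸ Z) ≃* alternatingGroup (Fin n)))
    (P : Sylow 3 G) :
    Nat.card ↥(P : Subgroup G) = 27 ∧
    (∃ x y : ↥(P : Subgroup G), x * y ≠ y * x) ∧
    (∀ x : ↥(P : Subgroup G), x ^ 3 = 1) := by
  haveI : Fact (Nat.Prime 3) := ⟨by norm_num⟩
  obtain ⟨e⟩ := hquot
  have hGcard : Nat.card G = Nat.card (alternatingGroup (Fin n)) * d := by
    rw [Subgroup.card_eq_card_quotient_mul_card_subgroup Z, hZcard,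
      Nat.card_congr e.toEquiv]
  have hA6 : Nat.card (alternatingGroup (Fin 6)) = 360 := by
    have h2 := two_mul_card_alternatingGroup (α := Fin 6)
    have h3 : Fintype.card (Equiv.Perm (Fin 6)) = 720 := by
      rw [Fintype.card_perm, Fintype.card_fin]
      rfl
    rw [Nat.card_eq_fintype_card]
    omega
  have hA7 : Nat.card (alternatingGroup (Fin 7)) = 2520 := by
    have h2 := two_mul_card_alternatingGroup (α := Fin 7)
    have h3 : Fintype.card (Equiv.Perm (Fin 7)) = 5040 := by
      rw [Fintype.card_perm, Fintype.card_fin]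
      rfl
    rw [Nat.card_eq_fintype_card]
    omega
  have hval : (Nat.card G).factorization 3 = 3 := by
    rcases hn with rfl | rfl <;> rcases hd with rfl | rfl
    · rw [hGcard, hA6, show (360*3 : ℕ) = 27 * 40 by norm_num]
      exact fact27 40 (by norm_num) (by norm_num)
    · rw [hGcard, hA6, show (360*6 : ℕ) = 27 * 80 by norm_num]
      exact fact27 80 (by norm_num) (by norm_num)
    · rw [hGcard, hA7, show (2520*3 : ℕ) = 27 * 280 by norm_num]
      exact fact27 280 (by norm_num) (by norm_num)
    · rw [hGcard, hA7, show (2520*6 : ℕ) = 27 * 560 by norm_num]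
      exact fact27 560 (by norm_num) (by norm_num)
  have hP27 : Nat.card ↥(P : Subgroup G) = 27 := by
    have h := Sylow.card_eq_multiplicity P
    rw [hval] at h
    exact h.trans (by norm_num)
  refine ⟨hP27, ?_, ?_⟩
  · -- nonabelian, via the transfer homomorphism
    by_contra hcomm
    push_neg at hcomm
    haveI : Fintype ↥Z := Fintype.ofFinite _
    obtain ⟨ζ, hζ⟩ := exists_prime_orderOf_dvd_card (G := ↥Z) 3
      (by rw [← Nat.card_eq_fintype_card, hZcard]
          rcases hd with rfl | rfl
          · exact dvd_refl 3
          · norm_num)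
    set z : G := (ζ : G) with hzdef
    have hzord : orderOf z = 3 := by
      rw [← hζ]
      exact orderOf_injective Z.subtype Subtype.coe_injective ζ
    have hzc : z ∈ Subgroup.center G := hZc ζ.2
    have hzP : z ∈ (P : Subgroup G) := by
      haveI hnormal : (Subgroup.zpowers z).Normal := by
        constructor
        intro h hh g
        obtain ⟨k, rfl⟩ := hh
        have hc : z ^ k ∈ Subgroup.center G := Subgroup.zpow_mem _ hzc k
        have : g * z ^ k * g⁻¹ = z ^ k := by
          rw [Subgroup.mem_center_iff.mp hc g]
          group
        rw [this]
        exact Subgroup.zpow_mem _ (Subgroup.mem_zpowers z) k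
      have hpg : IsPGroup 3 (Subgroup.zpowers z) :=
        IsPGroup.of_card (n := 1) (by rw [Nat.card_zpowers, hzord, pow_one])
      have hsup : IsPGroup 3 ((P : Subgroup G) ⊔ Subgroup.zpowers z : Subgroup G) :=
        IsPGroup.to_sup_of_normal_right P.isPGroup' hpg
      have heq := P.3 hsup le_sup_left
      have : z ∈ ((P : Subgroup G) ⊔ Subgroup.zpowers z : Subgroup G) :=
        SetLike.le_def.mp le_sup_right (Subgroup.mem_zpowers z)
      rwa [heq] at this
    letI : CommGroup ↥(P : Subgroup G) :=
      { (inferInstance : Group ↥(P : Subgroup G)) with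
        mul_comm := fun a b => hcomm a b }
    let V : G →* ↥(P : Subgroup G) := MonoidHom.transfer (MonoidHom.id ↥(P : Subgroup G))
    have hVz : V z = ⟨z ^ (P : Subgroup G).index, _⟩ :=
      MonoidHom.transfer_eq_pow (MonoidHom.id ↥(P : Subgroup G)) z
        (fun k g₀ _ => by
          have hck : z ^ k ∈ Subgroup.center G := Subgroup.pow_mem _ hzc k
          rw [Subgroup.mem_center_iff.mp hck g₀⁻¹]
          group)
    have hV1 : V z = 1 :=
      Abelianization.commutator_subset_ker V (hperf ▸ Subgroup.mem_top z)
    have hzpow : z ^ (P : Subgroup G).index = 1 := by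
      rw [hVz] at hV1
      exact congrArg Subtype.val hV1
    have h3dvd : (3:ℕ) ∣ (P : Subgroup G).index := by
      have hh := orderOf_dvd_of_pow_eq_one hzpow
      rwa [hzord] at hh
    exact P.not_dvd_index h3dvd
  · -- exponent 3
    intro x
    set q : G →* G ⧸ Z := QuotientGroup.mk' Z with hq
    have hx27 : (x : G) ^ 27 = 1 := by
      have h := pow_card_eq_one' (G := ↥(P : Subgroup G)) (x := x)
      rw [hP27] at h
      exact_mod_cast congrArg Subtype.val h
    set u : alternatingGroup (Fin n) := e (q (x : G)) with hu
    have hσ27 : ((u : Equiv.Perm (Fin n))) ^ 27 = 1 := by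
      have h1 : u ^ 27 = 1 := by
        rw [hu, ← map_pow, ← map_pow, hx27, map_one, map_one]
      exact_mod_cast congrArg Subtype.val h1
    have hσ3 : ((u : Equiv.Perm (Fin n))) ^ 3 = 1 :=
      pow27_to_pow3 (by rw [Fintype.card_fin]; omega) hσ27
    have hreal : ∃ τ : Equiv.Perm (Fin n), Equiv.Perm.sign τ = 1 ∧
        τ * (u : Equiv.Perm (Fin n)) * τ⁻¹ = (u : Equiv.Perm (Fin n))⁻¹ := by
      rcases hn with rfl | rfl
      exacts [real6 _ hσ3, real7 _ hσ3]
    obtain ⟨τ, hτs, hτc⟩ := hreal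
    set t : alternatingGroup (Fin n) := ⟨τ, mem_alternatingGroup.mpr hτs⟩ with ht
    obtain ⟨g, hg⟩ := QuotientGroup.mk'_surjective Z (e.symm t)
    have hw : g * ↑x * g⁻¹ * ↑x ∈ Z := by
      rw [← QuotientGroup.eq_one_iff]
      have he1 : e (q (g * ↑x * g⁻¹ * ↑x)) = 1 := by
        rw [map_mul, map_mul, map_mul, map_inv, map_mul, map_mul, map_mul, map_inv,
          hg, MulEquiv.apply_symm_apply]
        apply Subtype.ext
        have : ((t * u * t⁻¹ * u : alternatingGroup (Fin n)) : Equiv.Perm (Fin n))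
            = τ * ↑u * τ⁻¹ * ↑u := by push_cast [ht]; rfl
        rw [this, hτc]
        simp
      have h2 : q (g * ↑x * g⁻¹ * ↑x) = 1 := by
        apply e.injective
        rw [he1, map_one]
      exact h2
    set w : G := g * ↑x * g⁻¹ * ↑x with hwdef
    have hwc : w ∈ Subgroup.center G := hZc hw
    have hw6 : w ^ 6 = 1 := by
      have hwd : w ^ d = 1 := by
        have h := pow_card_eq_one' (G := ↥Z) (x := ⟨w, hw⟩)
        rw [hZcard] at h
        simpa using congrArg Subtype.val h
      rcases hd with rfl | rfl
      · rw [show (6:ℕ) = 3*2 from rfl, pow_mul, hwd, one_pow]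
      · exact hwd
    have hx3Z : (x : G) ^ 3 ∈ Z := by
      rw [← QuotientGroup.eq_one_iff]
      have : q ((x : G) ^ 3) = 1 := by
        apply e.injective
        rw [map_pow, map_pow, map_one, ← hu]
        exact Subtype.ext (by push_cast; exact hσ3)
      exact this
    have hx3c : (x : G) ^ 3 ∈ Subgroup.center G := hZc hx3Z
    have hx6 : (x : G) ^ 6 = w ^ 3 := by
      have h1 : g * (x : G) * g⁻¹ = w * (↑x)⁻¹ := by rw [hwdef]; group
      have h2 : (g * (x : G) * g⁻¹) ^ 3 = g * (x : G) ^ 3 * g⁻¹ := conj_pow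
      have h3 : g * (x : G) ^ 3 * g⁻¹ = (x : G) ^ 3 := by
        rw [Subgroup.mem_center_iff.mp hx3c g]
        group
      have h4 : Commute w ((x : G)⁻¹) :=
        (Subgroup.mem_center_iff.mp hwc ((x : G)⁻¹)).symm
      have h6 : (x : G) ^ 3 = w ^ 3 * ((x : G)⁻¹) ^ 3 := by
        rw [← h3, ← h2, h1, h4.mul_pow]
      calc (x : G) ^ 6 = (x : G) ^ 3 * (x : G) ^ 3 := by rw [← pow_add]
        _ = (w ^ 3 * ((x : G)⁻¹) ^ 3) * (x : G) ^ 3 := congrArg (· * (x : G) ^ 3) h6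
        _ = w ^ 3 := by group
    have hx12 : (x : G) ^ 12 = 1 := by
      have h1 : (x : G) ^ 12 = ((x : G) ^ 6) ^ 2 := by rw [← pow_mul]
      rw [h1, hx6, ← pow_mul]
      exact hw6
    have hdvd3 : orderOf (x : G) ∣ 3 := by
      have d1 : orderOf (x : G) ∣ 27 := orderOf_dvd_of_pow_eq_one hx27
      have d2 : orderOf (x : G) ∣ 12 := orderOf_dvd_of_pow_eq_one hx12
      have h := Nat.dvd_gcd d2 d1
      rwa [show Nat.gcd 12 27 = 3 from by norm_num] at h
    have hx3 : (x : G) ^ 3 = 1 := orderOf_dvd_iff_pow_eq_one.mp hdvd3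
    exact Subtype.ext (by rw [SubmonoidClass.coe_pow]; simpa using hx3)
end
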